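/- arXiv:1711.10820 — 3 statements merged into one kernel-verified Lean document; each statement's English description precedes it below -/
import Mathlib

section
/- In the greedy construction, writing σ'_k = red(a_{k+1}⋯a_{k+n−1}) and J_k = |{j ≤ k : σ'_j = σ'_k}|, the algorithm terminates at step k if and only if J_k = n+1, which holds if and only if σ_k := red(a_k⋯a_{k+n−1}) is the increasing permutation 12⋯n. -/
/-- `c_b`: shift values `≥ b` up by one. -/
def cshift (b x : ℕ) : ℕ := if x < b then x else x + 1

/-- the `i`-th smallest entry of `w` (1-based). -/
def nthSmallest (w : List ℕ) (i : ℕ) : ℕ := (List.insertionSort (· ≤ ·) w).getD (i - 1) 0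

/-- the new last letter of the `i`-th extension of `w`. -/
def extb (w : List ℕ) (i : ℕ) : ℕ :=
  if i ≤ w.length then nthSmallest w i else w.foldr max 0 + 1

/-- the `i`-th extension of `w`, `1 ≤ i ≤ w.length + 1`. -/
def ext (i : ℕ) (w : List ℕ) : List ℕ :=
  w.map (cshift (extb w i)) ++ [extb w i]

/-- reduced form: replace the `i`-th smallest entry by `i`. -/
def red (w : List ℕ) : List ℕ := w.map (fun x => (w.filter (· ≤ x)).length)

/-- `w` covers the `n`-permutation `p` (given in reduced form):
some length-`n` factor of `w` is order-isomorphic to `p`. -/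
def covers (w : List ℕ) (n : ℕ) (p : List ℕ) : Prop :=
  ∃ k, k + n ≤ w.length ∧ red ((w.drop k).take n) = p

/-- Boolean version of `covers`. -/
def coversB (w : List ℕ) (n : ℕ) (p : List ℕ) : Bool :=
  (List.range w.length).any fun k =>
    decide (k + n ≤ w.length) && decide (red ((w.drop k).take n) = p)

/-- one step of the greedy algorithm: append the smallest extension of the last
`n-1` letters whose order-isomorphism type is not yet a length-`n` factor;
return `none` if no extension is possible (termination). -/
def greedyStep (n : ℕ) (w : List ℕ) : Option (List ℕ) :=
  let s := w.drop (w.length - (n - 1))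
  match (List.range' 1 (s.length + 1)).find? (fun i => ! coversB w n (red (ext i s))) with
  | some i => some (w.map (cshift (extb s i)) ++ [extb s i])
  | none => none

/-- `greedy n k` is `Π'_{n,k}`, the word after `k` steps of the greedy algorithm
started from `12⋯(n-1)` (constant once the algorithm has terminated). -/
def greedy (n : ℕ) : ℕ → List ℕ
  | 0 => List.range' 1 (n - 1)
  | k + 1 =>
    match greedyStep n (greedy n k) with
    | some w => w
    | none => greedy n k

/-- the greedy algorithm performs exactly `k` steps and then terminates. -/
def terminatesAt (n k : ℕ) : Prop :=
  (∀ j < k, greedyStep n (greedy n j) ≠ none) ∧ greedyStep n (greedy n k) = none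

/-- the `i`-th letter `a_i` of a word (1-based). -/
def letter (w : List ℕ) (i : ℕ) : ℕ := w.getD (i - 1) 0

/-- `σ_k`, the reduced form of the length-`n` factor starting at position `k` (1-based). -/
def sigma (w : List ℕ) (n k : ℕ) : List ℕ := red ((w.drop (k - 1)).take n)

open List

/-! ### basic lemmas about red and cshift -/

lemma red_eq (l : List ℕ) : red l = l.map (fun x => l.countP (fun y => y ≤ x)) := by
  simp [red, List.countP_eq_length_filter]

lemma cshift_lt_iff {b x y : ℕ} : cshift b x < cshift b y ↔ x < y := by
  unfold cshift; split <;> split <;> omega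

lemma cshift_le_iff {b x y : ℕ} : cshift b x ≤ cshift b y ↔ x ≤ y := by
  unfold cshift; split <;> split <;> omega

lemma cshift_ne (b x : ℕ) : cshift b x ≠ b := by unfold cshift; split <;> omega

lemma cshift_injective (b : ℕ) : Function.Injective (cshift b) := by
  intro x y h; unfold cshift at h; revert h; split <;> split <;> omega

/-- master lemma: `red` is invariant under maps that preserve order on members. -/
lemma red_map_of_rel (l : List ℕ) (f : ℕ → ℕ)
    (hf : ∀ x ∈ l, ∀ y ∈ l, (f y ≤ f x ↔ y ≤ x)) : red (l.map f) = red l := by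
  rw [red_eq, red_eq, List.map_map]
  refine List.map_congr_left (fun x hx => ?_)
  show List.countP _ (l.map f) = _
  rw [List.countP_map]
  refine List.countP_congr (fun y hy => ?_)
  simp only [Function.comp_apply, decide_eq_true_eq]
  exact hf x hx y hy

lemma red_map_cshift (b : ℕ) (l : List ℕ) : red (l.map (cshift b)) = red l :=
  red_map_of_rel l _ (fun _ _ _ _ => cshift_le_iff)

lemma rank_le_rank {l : List ℕ} {x y : ℕ} (h : y ≤ x) :
    l.countP (fun z => z ≤ y) ≤ l.countP (fun z => z ≤ x) :=
  List.countP_mono_left (fun z _ hz => by simp only [decide_eq_true_eq] at *; omega)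

lemma rank_lt_rank {l : List ℕ} {x y : ℕ} (hx : x ∈ l) (h : y < x) :
    l.countP (fun z => z ≤ y) < l.countP (fun z => z ≤ x) := by
  obtain ⟨l₁, l₂, rfl⟩ := List.append_of_mem hx
  simp only [List.countP_append, List.countP_cons, decide_eq_true_eq]
  have h1 : l₁.countP (fun z => z ≤ y) ≤ l₁.countP (fun z => z ≤ x) := rank_le_rank h.le
  have h2 : l₂.countP (fun z => z ≤ y) ≤ l₂.countP (fun z => z ≤ x) := rank_le_rank h.le
  have hxy : ¬ (x ≤ y) := by omega
  simp only [hxy, if_false, if_pos (le_refl x)]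
  omega

lemma rank_le_iff {l : List ℕ} {x y : ℕ} (hx : x ∈ l) (hy : y ∈ l) :
    l.countP (fun z => z ≤ y) ≤ l.countP (fun z => z ≤ x) ↔ y ≤ x := by
  constructor
  · intro h; by_contra hc
    push_neg at hc
    exact absurd (rank_lt_rank hy hc) (by omega)
  · exact rank_le_rank

lemma red_red (l : List ℕ) : red (red l) = red l := by
  have h := red_map_of_rel l _ (fun x hx y hy => rank_le_iff hx hy)
  rwa [← red_eq l] at h

lemma red_take_red (l : List ℕ) (m : ℕ) : red ((red l).take m) = red (l.take m) := by
  have h := red_map_of_rel (l.take m) (fun x => l.countP (fun y => y ≤ x))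
    (fun x hx y hy => rank_le_iff (List.mem_of_mem_take hx) (List.mem_of_mem_take hy))
  rwa [List.map_take, ← red_eq l] at h

lemma red_drop_red (l : List ℕ) (m : ℕ) : red ((red l).drop m) = red (l.drop m) := by
  have h := red_map_of_rel (l.drop m) (fun x => l.countP (fun y => y ≤ x))
    (fun x hx y hy => rank_le_iff (List.mem_of_mem_drop hx) (List.mem_of_mem_drop hy))
  rwa [List.map_drop, ← red_eq l] at h

lemma red_nodup {l : List ℕ} (h : l.Nodup) : (red l).Nodup := by
  rw [red_eq]
  refine h.map_on (fun x hx y hy hxy => ?_)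
  by_contra hne
  rcases Nat.lt_or_ge x y with hlt | hge
  · have h2 := rank_lt_rank hy hlt
    omega
  · have hlt : y < x := by omega
    have h2 := rank_lt_rank hx hlt
    omega

lemma red_length (l : List ℕ) : (red l).length = l.length := by simp [red]

lemma mem_red_bounds {l : List ℕ} {x : ℕ} (h : x ∈ red l) : 1 ≤ x ∧ x ≤ l.length := by
  rw [red_eq] at h
  obtain ⟨y, hy, rfl⟩ := List.mem_map.1 h
  constructor
  · have : 0 < l.countP (fun z => z ≤ y) := by
      rw [List.countP_pos_iff]; exact ⟨y, hy, by simp⟩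
    omega
  · exact List.countP_le_length
open List

/-! ### the key extension lemma -/

/-- `ered i t`: the pattern of the `i`-th extension of any word with pattern `t`. -/
def ered (i : ℕ) (t : List ℕ) : List ℕ := t.map (cshift i) ++ [i]

lemma ered_getLast? (i : ℕ) (t : List ℕ) : (ered i t).getLast? = some i :=
  List.getLast?_concat

lemma ered_length (i : ℕ) (t : List ℕ) : (ered i t).length = t.length + 1 := by
  simp [ered]

lemma ered_i_eq {i i' : ℕ} {t t' : List ℕ} (h : ered i t = ered i' t') : i = i' := by
  have h2 := h ▸ ered_getLast? i t
  rw [ered_getLast? i' t'] at h2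
  exact (Option.some_injective _ h2).symm

lemma red_take_ered (i : ℕ) (t : List ℕ) : red ((ered i t).take t.length) = red t := by
  rw [ered, List.take_left' (by simp)]
  exact red_map_cshift i t

lemma strictMono_getElem {u : List ℕ} (hu : u.Pairwise (· < ·)) {m j : ℕ}
    (hm : m < u.length) (hj : j < u.length) (h : m < j) : u[m] < u[j] :=
  List.pairwise_iff_getElem.1 hu m j hm hj h

lemma monotone_getElem {u : List ℕ} (hu : u.Pairwise (· < ·)) {m j : ℕ}
    (hm : m < u.length) (hj : j < u.length) (h : j ≤ m) : u[j] ≤ u[m] := by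
  rcases Nat.eq_or_lt_of_le h with rfl | hlt
  · exact le_rfl
  · exact (strictMono_getElem hu hj hm hlt).le

lemma countP_lt_of_strictSorted (u : List ℕ) (hu : u.Pairwise (· < ·)) (j : ℕ)
    (hj : j < u.length) {x : ℕ} (hx : u[j] = x) : u.countP (fun z => z < x) = j := by
  subst hx
  have key : ∀ (x : ℕ), u[j] = x → u.countP (fun z => z < x) = j := by
    intro x hx
    rw [← List.take_append_drop j u, List.countP_append]
    have h1 : (u.take j).countP (fun z => z < x) = (u.take j).length := by
      rw [List.countP_eq_length]
      intro a ha
      rw [List.mem_iff_getElem] at ha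
      obtain ⟨m, hm, rfl⟩ := ha
      have hm2 : m < j ∧ m < u.length := by
        have := hm; rw [List.length_take] at this; omega
      rw [List.getElem_take]
      have := strictMono_getElem hu hm2.2 hj hm2.1
      simp only [decide_eq_true_eq]; omega
    have h2 : (u.drop j).countP (fun z => z < x) = 0 := by
      rw [List.countP_eq_zero]
      intro a ha
      rw [List.mem_iff_getElem] at ha
      obtain ⟨m, hm, rfl⟩ := ha
      have hm2 : j + m < u.length := by
        have := hm; rw [List.length_drop] at this; omega
      rw [List.getElem_drop]
      have := monotone_getElem hu hm2 hj (by omega)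
      simp only [decide_eq_true_eq]; omega
    rw [h1, h2, List.length_take]
    omega
  exact key _ rfl

lemma countP_le_ge_of_strictSorted (u : List ℕ) (hu : u.Pairwise (· < ·)) (j : ℕ)
    (hj : j < u.length) {x : ℕ} (hx : u[j] ≤ x) :
    j + 1 ≤ u.countP (fun z => z ≤ x) := by
  have hx' : ∀ y, u[j] = y → y ≤ x := fun y hy => hy ▸ hx
  have key : ∀ (c : ℕ), u[j] = c → j + 1 ≤ u.countP (fun z => z ≤ x) := by
    intro c hc
    have hcx : c ≤ x := hx' c hc
    rw [← List.take_append_drop (j+1) u, List.countP_append]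
    have h1 : (u.take (j+1)).countP (fun z => z ≤ x) = (u.take (j+1)).length := by
      rw [List.countP_eq_length]
      intro a ha
      rw [List.mem_iff_getElem] at ha
      obtain ⟨m, hm, rfl⟩ := ha
      have hm2 : m < j + 1 ∧ m < u.length := by
        have := hm; rw [List.length_take] at this; omega
      rw [List.getElem_take]
      have h3 : u[m] ≤ u[j] := monotone_getElem hu hj hm2.2 (by omega)
      rw [hc] at h3
      simp only [decide_eq_true_eq]; omega
    have hlen : (u.take (j+1)).length = j + 1 := by
      rw [List.length_take]; omega
    omega
  exact key _ rfl

lemma le_foldr_max (s : List ℕ) : ∀ x ∈ s, x ≤ s.foldr max 0 := by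
  induction s with
  | nil => simp
  | cons a t ih =>
    intro x hx
    rcases List.mem_cons.1 hx with rfl | hx
    · simp [List.foldr]
    · exact le_trans (ih x hx) (by simp [List.foldr])

lemma extb_facts {s : List ℕ} (hs : s.Nodup) {i : ℕ} (h1 : 1 ≤ i) (h2 : i ≤ s.length + 1) :
    s.countP (fun z => z < extb s i) = i - 1 ∧
    ∀ x ∈ s, (extb s i ≤ x ↔ i ≤ s.countP (fun z => z ≤ x)) := by
  set u := List.insertionSort (· ≤ ·) s with hu
  have hperm : u.Perm s := List.perm_insertionSort _ s
  have hsorted : u.Pairwise (· < ·) :=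
    ((List.pairwise_insertionSort _ s).and (hperm.nodup_iff.2 hs)).imp (fun h => lt_of_le_of_ne h.1 h.2)
  have hlen : u.length = s.length := hperm.length_eq
  rcases Nat.lt_or_ge i (s.length + 1) with hcase | hcase
  · have hi : i - 1 < u.length := by omega
    have hb : extb s i = u[i-1] := by
      rw [extb, if_pos (by omega : i ≤ s.length), nthSmallest, ← hu,
        List.getD_eq_getElem u 0 hi]
    constructor
    · rw [← hperm.countP_eq, countP_lt_of_strictSorted u hsorted (i-1) hi hb.symm]
    · intro x hx
      constructor
      · intro hbx
        rw [← hperm.countP_eq]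
        have := countP_le_ge_of_strictSorted u hsorted (i-1) hi (hb ▸ hbx)
        omega
      · intro hrank
        by_contra hc
        push_neg at hc
        have hmono : s.countP (fun z => z ≤ x) ≤ s.countP (fun z => z < extb s i) :=
          List.countP_mono_left (fun z _ hz => by
            simp only [decide_eq_true_eq] at *; omega)
        have hcnt : s.countP (fun z => z < extb s i) = i - 1 := by
          rw [← hperm.countP_eq, countP_lt_of_strictSorted u hsorted (i-1) hi hb.symm]
        omega
  · have hi : i = s.length + 1 := by omega
    have hb : extb s i = s.foldr max 0 + 1 := by
      rw [extb, if_neg (by omega)]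
    have hbig : ∀ x ∈ s, x < extb s i := fun x hx => by
      have := le_foldr_max s x hx; omega
    constructor
    · rw [List.countP_eq_length.2 (fun a ha => by simpa using hbig a ha)]
      omega
    · intro x hx
      have hx1 : ¬ extb s i ≤ x := by have := hbig x hx; omega
      have hx2 : ¬ i ≤ s.countP (fun z => z ≤ x) := by
        have := List.countP_le_length (l := s) (p := fun z => decide (z ≤ x))
        omega
      tauto

/-- THE key lemma: the pattern of the `i`-th extension depends only on the pattern. -/
lemma red_ext {s : List ℕ} (hs : s.Nodup) {i : ℕ} (h1 : 1 ≤ i) (h2 : i ≤ s.length + 1) :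
    red (ext i s) = ered i (red s) := by
  obtain ⟨hα, hβ⟩ := extb_facts hs h1 h2
  set b := extb s i with hbdef
  have hext : ext i s = s.map (cshift b) ++ [b] := rfl
  have hcb : ∀ y x : ℕ, (cshift b y ≤ cshift b x ↔ y ≤ x) := fun y x => cshift_le_iff
  have hcbb : ∀ y : ℕ, (cshift b y ≤ b ↔ y < b) := fun y => by
    unfold cshift; split <;> omega
  have hbcb : ∀ x : ℕ, (b ≤ cshift b x ↔ b ≤ x) := fun x => by
    unfold cshift; split <;> omega
  have hrank : ∀ z, (ext i s).countP (fun y => y ≤ z) =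
      s.countP (fun y => cshift b y ≤ z) + (if b ≤ z then 1 else 0) := by
    intro z
    conv_lhs => rw [hext]
    rw [List.countP_append, List.countP_map]
    congr 1
    simp [List.countP_singleton]
  have hlast : (ext i s).countP (fun y => y ≤ b) = i := by
    rw [hrank b, if_pos le_rfl]
    have he : s.countP (fun y => cshift b y ≤ b) = s.countP (fun y => y < b) :=
      List.countP_congr (fun y _ => by simp only [decide_eq_true_eq, hcbb y])
    rw [he, hα]
    omega
  have hmem : ∀ x ∈ s, (fun z => (ext i s).countP (fun y => y ≤ z)) (cshift b x) =
      cshift i (s.countP (fun y => y ≤ x)) := by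
    intro x hx
    show (ext i s).countP (fun y => y ≤ cshift b x) = _
    rw [hrank (cshift b x)]
    have he1 : s.countP (fun y => cshift b y ≤ cshift b x) = s.countP (fun y => y ≤ x) :=
      List.countP_congr (fun y _ => by simp only [decide_eq_true_eq, hcb y x])
    rw [he1]
    have hiff := hβ x hx
    rw [show cshift i (s.countP (fun y => y ≤ x)) =
      if s.countP (fun y => y ≤ x) < i then s.countP (fun y => y ≤ x)
      else s.countP (fun y => y ≤ x) + 1 from rfl]
    rcases Nat.lt_or_ge (s.countP (fun y => y ≤ x)) i with hlt | hge
    · have hnb : ¬ b ≤ cshift b x := fun hc => by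
        have := hiff.1 ((hbcb x).1 hc); omega
      rw [if_neg hnb, if_pos hlt]
      omega
    · have hb2 : b ≤ cshift b x := (hbcb x).2 (hiff.2 hge)
      rw [if_pos hb2, if_neg (show ¬ s.countP (fun y => y ≤ x) < i by omega)]
  have step1 : red (ext i s) =
      (s.map (cshift b) ++ [b]).map (fun z => (ext i s).countP (fun y => y ≤ z)) :=
    (red_eq _).trans (congrArg _ hext)
  rw [step1, List.map_append, List.map_singleton, hlast]
  have hmc : (s.map (cshift b)).map (fun z => (ext i s).countP (fun y => y ≤ z)) =
      s.map (fun x => cshift i (s.countP (fun y => y ≤ x))) := by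
    rw [List.map_map]
    exact List.map_congr_left hmem
  rw [hmc, ered, red_eq, List.map_map]
  rfl
/-! ### identity patterns and reconstruction -/

lemma take_range'_1 (m k : ℕ) : (List.range' 1 k).take m = List.range' 1 (min m k) := by
  rw [List.range'_eq_map_range, ← List.map_take, List.take_range, List.range'_eq_map_range]

lemma countP_le_range' {m x : ℕ} (h1 : 1 ≤ x) (h2 : x ≤ m) :
    (List.range' 1 m).countP (fun y => y ≤ x) = x := by
  induction m with
  | zero => omega
  | succ m ih =>
    rw [List.range'_concat, List.countP_append, List.countP_singleton]
    rcases Nat.lt_or_ge m x with hc | hc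
    · have hx : x = m + 1 := by omega
      subst hx
      have : (List.range' 1 m).countP (fun y => y ≤ m + 1) = (List.range' 1 m).length := by
        rw [List.countP_eq_length]
        intro a ha
        rw [List.mem_range'_1] at ha
        simp only [decide_eq_true_eq]; omega
      rw [this]
      simp only [List.length_range', decide_eq_true_eq]
      rw [if_pos (by omega)]
    · rw [ih (by omega)]
      simp only [decide_eq_true_eq]
      rw [if_neg (by omega)]
      omega

lemma red_range'_1 (m : ℕ) : red (List.range' 1 m) = List.range' 1 m := by
  rw [red_eq]
  have : ∀ x ∈ List.range' 1 m, (List.range' 1 m).countP (fun y => y ≤ x) = x := by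
    intro x hx
    rw [List.mem_range'_1] at hx
    exact countP_le_range' (by omega) (by omega)
  rw [List.map_congr_left this, List.map_id']

lemma red_range' (a m : ℕ) (ha : 1 ≤ a) : red (List.range' a m) = List.range' 1 m := by
  have h1 : red (List.range' a m) = red (List.range m) := by
    rw [List.range'_eq_map_range]
    exact red_map_of_rel _ _ (fun x _ y _ => by omega)
  have h2 : red (List.range' 1 m) = red (List.range m) := by
    rw [List.range'_eq_map_range]
    exact red_map_of_rel _ _ (fun x _ y _ => by omega)
  rw [h1, ← h2, red_range'_1]

lemma ered_top_identity {n : ℕ} (hn : 1 ≤ n) :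
    ered n (List.range' 1 (n-1)) = List.range' 1 n := by
  rw [ered]
  have h1 : (List.range' 1 (n-1)).map (cshift n) = List.range' 1 (n-1) := by
    have : ∀ x ∈ List.range' 1 (n-1), cshift n x = x := by
      intro x hx
      rw [List.mem_range'_1] at hx
      unfold cshift
      rw [if_pos (by omega)]
    rw [List.map_congr_left this, List.map_id']
  rw [h1]
  have h2 : List.range' 1 n = List.range' 1 ((n-1)+1) := by congr 1; omega
  rw [h2, List.range'_concat]
  congr 2
  omega

lemma map_eq_self {α : Type*} {l : List α} {f : α → α} :
    l.map f = l ↔ ∀ x ∈ l, f x = x := by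
  induction l with
  | nil => simp
  | cons a t ih => simp [ih]

lemma red_fixed_rank {l : List ℕ} (h : red l = l) :
    ∀ x ∈ l, l.countP (fun y => y ≤ x) = x := by
  rw [red_eq] at h
  exact map_eq_self.1 h

lemma recon {l : List ℕ} (hn : l.Nodup) (hr : red l = l) (hne : l ≠ []) :
    l = l.headI :: (red l.tail).map (cshift l.headI) := by
  rcases l with _ | ⟨h, t⟩
  · exact absurd rfl hne
  simp only [List.headI_cons, List.tail_cons]
  congr 1
  have hnotmem : h ∉ t := (List.nodup_cons.1 hn).1
  have hkey : ∀ x ∈ t, cshift h ((t.countP (fun y => y ≤ x))) = x := by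
    intro x hx
    have hx' := red_fixed_rank hr x (List.mem_cons_of_mem h hx)
    rw [List.countP_cons] at hx'
    have hne' : h ≠ x := fun hc => hnotmem (hc ▸ hx)
    have hd : (if decide (h ≤ x) = true then 1 else 0) = (if h ≤ x then 1 else 0) := by
      simp
    rw [hd] at hx'
    unfold cshift
    split <;> rename_i hsp <;> by_cases hle : h ≤ x <;> simp [hle] at hx' <;> omega
  rw [red_eq, List.map_map]
  symm
  exact map_eq_self.2 hkey

lemma recon_eq {p q : List ℕ} (hp : p.Nodup) (hq : q.Nodup) (hrp : red p = p)
    (hrq : red q = q) (hnep : p ≠ []) (hneq : q ≠ [])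
    (hhead : p.headI = q.headI) (htail : red p.tail = red q.tail) : p = q := by
  rw [recon hp hrp hnep, recon hq hrq hneq, hhead, htail]
/-! ### run structure -/

lemma find?_range'_some {p : ℕ → Bool} : ∀ {m a i : ℕ}, (List.range' a m).find? p = some i →
    a ≤ i ∧ i < a + m ∧ p i = true ∧ ∀ l, a ≤ l → l < i → p l = false := by
  intro m
  induction m with
  | zero => intro a i h; simp at h
  | succ m ih =>
    intro a i h
    rw [List.range'_succ] at h
    rw [List.find?_cons] at h
    cases hpa : p a
    · rw [hpa] at h
      obtain ⟨h1, h2, h3, h4⟩ := ih h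
      exact ⟨by omega, by omega, h3, fun l hl1 hl2 => by
        rcases Nat.eq_or_lt_of_le hl1 with rfl | hlt
        · exact hpa
        · exact h4 l hlt hl2⟩
    · rw [hpa] at h
      simp only [Option.some.injEq] at h
      subst h
      exact ⟨le_rfl, by omega, hpa, fun l hl1 hl2 => by omega⟩

lemma greedyStep_some {n : ℕ} {w u : List ℕ} (h : greedyStep n w = some u) :
    ∃ i, (List.range' 1 ((w.drop (w.length - (n-1))).length + 1)).find?
        (fun i => ! coversB w n (red (ext i (w.drop (w.length - (n-1)))))) = some i ∧
      u = w.map (cshift (extb (w.drop (w.length - (n-1))) i)) ++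
        [extb (w.drop (w.length - (n-1))) i] := by
  have h' : (match (List.range' 1 ((w.drop (w.length - (n-1))).length + 1)).find?
      (fun i => ! coversB w n (red (ext i (w.drop (w.length - (n-1)))))) with
    | some i => some (w.map (cshift (extb (w.drop (w.length - (n-1))) i)) ++
        [extb (w.drop (w.length - (n-1))) i])
    | none => none) = some u := h
  rcases hf : (List.range' 1 ((w.drop (w.length - (n-1))).length + 1)).find?
      (fun i => ! coversB w n (red (ext i (w.drop (w.length - (n-1)))))) with _ | i
  · rw [hf] at h'; exact absurd h' (by simp)
  · rw [hf] at h'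
    simp only [Option.some.injEq] at h'
    exact ⟨i, rfl, h'.symm⟩

lemma greedyStep_none_iff {n : ℕ} {w : List ℕ} :
    greedyStep n w = none ↔ (List.range' 1 ((w.drop (w.length - (n-1))).length + 1)).find?
      (fun i => ! coversB w n (red (ext i (w.drop (w.length - (n-1)))))) = none := by
  have h' : greedyStep n w = (match (List.range' 1 ((w.drop (w.length - (n-1))).length + 1)).find?
      (fun i => ! coversB w n (red (ext i (w.drop (w.length - (n-1)))))) with
    | some i => some (w.map (cshift (extb (w.drop (w.length - (n-1))) i)) ++
        [extb (w.drop (w.length - (n-1))) i])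
    | none => none) := rfl
  rw [h']
  rcases hf : (List.range' 1 ((w.drop (w.length - (n-1))).length + 1)).find?
      (fun i => ! coversB w n (red (ext i (w.drop (w.length - (n-1)))))) with _ | i <;>
    simp

lemma greedy_succ_of_some {n j : ℕ} {u : List ℕ} (h : greedyStep n (greedy n j) = some u) :
    greedy n (j+1) = u := by
  rw [greedy, h]

lemma coversB_iff {w : List ℕ} {n : ℕ} (hn : 1 ≤ n) {p : List ℕ} :
    coversB w n p = true ↔ ∃ j, j + n ≤ w.length ∧ red ((w.drop j).take n) = p := by
  rw [coversB, List.any_eq_true]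
  constructor
  · rintro ⟨j, hj, hcond⟩
    rw [Bool.and_eq_true, decide_eq_true_eq, decide_eq_true_eq] at hcond
    exact ⟨j, hcond.1, hcond.2⟩
  · rintro ⟨j, h1, h2⟩
    refine ⟨j, List.mem_range.2 (by omega), ?_⟩
    rw [Bool.and_eq_true, decide_eq_true_eq, decide_eq_true_eq]
    exact ⟨h1, h2⟩

section Run

variable {n : ℕ} (hn : 2 ≤ n)

lemma run_len : ∀ j, (∀ j' < j, greedyStep n (greedy n j') ≠ none) →
    (greedy n j).length = n - 1 + j := by
  intro j
  induction j with
  | zero => intro _; show (List.range' 1 (n-1)).length = n - 1 + 0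
            rw [List.length_range']
            omega
  | succ j ih =>
    intro hrun
    have hj := hrun j (by omega)
    rcases ho : greedyStep n (greedy n j) with _ | u
    · exact absurd ho hj
    obtain ⟨i, _, hu⟩ := greedyStep_some ho
    rw [greedy_succ_of_some ho, hu]
    simp only [List.length_append, List.length_map, List.length_singleton]
    rw [ih (fun j' hj' => hrun j' (by omega))]
    omega

lemma run_nodup : ∀ j, (∀ j' < j, greedyStep n (greedy n j') ≠ none) →
    (greedy n j).Nodup := by
  intro j
  induction j with
  | zero => intro _
            show (List.range' 1 (n-1)).Nodup
            exact List.nodup_range'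
  | succ j ih =>
    intro hrun
    have hj := hrun j (by omega)
    rcases ho : greedyStep n (greedy n j) with _ | u
    · exact absurd ho hj
    obtain ⟨i, _, hu⟩ := greedyStep_some ho
    rw [greedy_succ_of_some ho, hu]
    set b := extb ((greedy n j).drop ((greedy n j).length - (n-1))) i
    have h1 : ((greedy n j).map (cshift b)).Nodup :=
      (ih (fun j' hj' => hrun j' (by omega))).map (cshift_injective b)
    rw [List.nodup_append]
    refine ⟨h1, List.nodup_singleton b, ?_⟩
    intro x hx
    rw [List.mem_map] at hx
    obtain ⟨y, _, rfl⟩ := hx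
    simp only [List.mem_singleton]
    rintro _ rfl
    exact cshift_ne b y

lemma run_stab_step {j : ℕ} {u : List ℕ} (h : greedyStep n (greedy n j) = some u)
    {p m : ℕ} (hpm : p + m ≤ (greedy n j).length) :
    red (((greedy n (j+1)).drop p).take m) = red (((greedy n j).drop p).take m) := by
  obtain ⟨i, _, hu⟩ := greedyStep_some h
  rw [greedy_succ_of_some h, hu]
  set b := extb ((greedy n j).drop ((greedy n j).length - (n-1))) i
  rw [List.drop_append_of_le_length (by simp; omega),
    List.take_append_of_le_length (by simp [List.length_drop]; omega),
    ← List.map_drop, ← List.map_take, red_map_cshift]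

lemma run_stab : ∀ (d j : ℕ), (∀ j' < j + d, greedyStep n (greedy n j') ≠ none) →
    ∀ p m, p + m ≤ (greedy n j).length →
    red (((greedy n (j+d)).drop p).take m) = red (((greedy n j).drop p).take m) := by
  intro d
  induction d with
  | zero => intro j _ p m _; rfl
  | succ d ih =>
    intro j hrun p m hpm
    have hstep : greedyStep n (greedy n (j+d)) ≠ none := hrun (j+d) (by omega)
    rcases ho : greedyStep n (greedy n (j+d)) with _ | u
    · exact absurd ho hstep
    have hlen1 : (greedy n j).length = n - 1 + j :=
      run_len j (fun j' hj' => hrun j' (by omega))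
    have hlen2 : (greedy n (j+d)).length = n - 1 + (j + d) :=
      run_len (j+d) (fun j' hj' => hrun j' (by omega))
    have : j + (d+1) = (j+d) + 1 := by omega
    rw [this, run_stab_step ho (by omega)]
    exact ih j (fun j' hj' => hrun j' (by omega)) p m hpm

end Run
/-! ### the pattern sequences of the run -/

def tauf (n k j : ℕ) : List ℕ := red (((greedy n k).drop j).take (n - 1))

def ef (n k j : ℕ) : List ℕ := red (((greedy n k).drop j).take n)

lemma bool_nn {b : Bool} (h : ¬ ((!b) = true)) : b = true := by
  cases b <;> simp_all

lemma bool_nn' {b : Bool} (h : b = true) : ¬ ((!b) = true) := by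
  cases b <;> simp_all

section RunSeq

variable {n k : ℕ}

lemma stab_k (hrun : ∀ j' < k, greedyStep n (greedy n j') ≠ none) {j p m : ℕ}
    (hj : j ≤ k) (hpm : p + m ≤ (greedy n j).length) :
    red (((greedy n k).drop p).take m) = red (((greedy n j).drop p).take m) := by
  have h := run_stab (n := n) (k - j) j (by
    intro j' hj'
    exact hrun j' (by omega)) p m hpm
  rwa [show j + (k - j) = k by omega] at h

lemma tau_red (j : ℕ) : red (tauf n k j) = tauf n k j := red_red _

lemma e_red (j : ℕ) : red (ef n k j) = ef n k j := red_red _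

lemma tau_nodup (hrun : ∀ j' < k, greedyStep n (greedy n j') ≠ none) (j : ℕ) :
    (tauf n k j).Nodup :=
  red_nodup (((List.take_sublist _ _).trans (List.drop_sublist _ _)).nodup (run_nodup k hrun))

lemma e_nodup (hrun : ∀ j' < k, greedyStep n (greedy n j') ≠ none) (j : ℕ) :
    (ef n k j).Nodup :=
  red_nodup (((List.take_sublist _ _).trans (List.drop_sublist _ _)).nodup (run_nodup k hrun))

lemma tau_len (hrun : ∀ j' < k, greedyStep n (greedy n j') ≠ none) {j : ℕ} (hj : j ≤ k) :
    (tauf n k j).length = n - 1 := by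
  rw [tauf, red_length, List.length_take, List.length_drop, run_len k hrun]
  omega

lemma e_len (hrun : ∀ j' < k, greedyStep n (greedy n j') ≠ none) {j : ℕ} (hj : j < k)
    (hn : 2 ≤ n) : (ef n k j).length = n := by
  rw [ef, red_length, List.length_take, List.length_drop, run_len k hrun]
  omega

lemma tau_prefix (j : ℕ) (hn : 2 ≤ n) : red ((ef n k j).take (n-1)) = tauf n k j := by
  rw [ef, red_take_red, List.take_take, tauf]
  congr 2
  omega

lemma tau_suffix (j : ℕ) : tauf n k (j+1) = red ((ef n k j).drop 1) := by
  rw [ef, red_drop_red, List.drop_take, List.drop_drop, tauf]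

lemma tau0 (hrun : ∀ j' < k, greedyStep n (greedy n j') ≠ none) (hn : 2 ≤ n) :
    tauf n k 0 = List.range' 1 (n-1) := by
  rw [tauf, stab_k hrun (Nat.zero_le k) (by
    show 0 + (n-1) ≤ (greedy n 0).length
    show 0 + (n-1) ≤ (List.range' 1 (n-1)).length
    rw [List.length_range']
    omega)]
  show red (((List.range' 1 (n-1)).drop 0).take (n-1)) = _
  rw [List.drop_zero, List.take_of_length_le (by rw [List.length_range']), red_range'_1]

lemma cover_iff (hrun : ∀ j' < k, greedyStep n (greedy n j') ≠ none) (hn : 2 ≤ n)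
    {j : ℕ} (hj : j ≤ k) (p : List ℕ) :
    coversB (greedy n j) n p = true ↔ ∃ j' < j, ef n k j' = p := by
  rw [coversB_iff (by omega : 1 ≤ n)]
  have hlen : (greedy n j).length = n - 1 + j :=
    run_len j (fun j' hj' => hrun j' (by omega))
  constructor
  · rintro ⟨pos, h1, h2⟩
    have hpos : pos < j := by omega
    refine ⟨pos, hpos, ?_⟩
    rw [ef, stab_k hrun hj (by omega : pos + n ≤ (greedy n j).length)]
    exact h2
  · rintro ⟨j', hj', hp⟩
    refine ⟨j', by omega, ?_⟩
    rw [← stab_k hrun hj (by omega : j' + n ≤ (greedy n j).length)]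
    exact hp

lemma estep (hrun : ∀ j' < k, greedyStep n (greedy n j') ≠ none) (hn : 2 ≤ n)
    {j : ℕ} (hj : j < k) :
    ∃ i, 1 ≤ i ∧ i ≤ n ∧ ef n k j = ered i (tauf n k j) ∧
      (∀ l, 1 ≤ l → l < i → ∃ j' < j, ef n k j' = ered l (tauf n k j)) ∧
      ¬ ∃ j' < j, ef n k j' = ered i (tauf n k j) := by
  rcases ho : greedyStep n (greedy n j) with _ | u
  · exact absurd ho (hrun j hj)
  obtain ⟨i, hfind, hu⟩ := greedyStep_some ho
  have hlenW : (greedy n j).length = n - 1 + j :=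
    run_len j (fun j' hj' => hrun j' (by omega))
  have hdef : (greedy n j).length - (n-1) = j := by omega
  rw [hdef] at hfind hu
  set s := (greedy n j).drop j with hs
  have hslen : s.length = n - 1 := by rw [hs, List.length_drop, hlenW]; omega
  have hsnodup : s.Nodup :=
    (List.drop_sublist _ _).nodup (run_nodup j (fun j' hj' => hrun j' (by omega)))
  have hreds : red s = tauf n k j := by
    rw [tauf, stab_k hrun (le_of_lt hj) (by omega : j + (n-1) ≤ (greedy n j).length)]
    rw [← hs, List.take_of_length_le (by omega)]
  rw [hslen] at hfind
  obtain ⟨hi1, hi2, hpred, hmin⟩ := find?_range'_some hfind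
  have hi2' : i ≤ n := by omega
  have hext_red : ∀ l, 1 ≤ l → l ≤ n → red (ext l s) = ered l (tauf n k j) := by
    intro l hl1 hl2
    rw [red_ext hsnodup hl1 (by omega), hreds]
  have hej : ef n k j = red (ext i s) := by
    have h1 : ef n k j = red (((greedy n (j+1)).drop j).take n) := by
      rw [ef, stab_k hrun (by omega : j + 1 ≤ k) (by
        rw [run_len (j+1) (fun j' hj' => hrun j' (by omega))]
        omega : j + n ≤ (greedy n (j+1)).length)]
    rw [h1, greedy_succ_of_some ho, hu]
    rw [List.drop_append_of_le_length (by rw [List.length_map, hlenW]; omega),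
      ← List.map_drop, ← hs,
      List.take_of_length_le (by
        rw [List.length_append, List.length_map, hslen, List.length_singleton]
        omega)]
    rfl
  refine ⟨i, hi1, hi2', ?_, ?_, ?_⟩
  · rw [hej, hext_red i hi1 hi2']
  · intro l hl1 hl2
    have hfl := hmin l hl1 hl2
    rw [Bool.not_eq_false'] at hfl
    rw [← hext_red l hl1 (by omega)]
    exact (cover_iff hrun hn (le_of_lt hj) _).1 hfl
  · rw [Bool.not_eq_true'] at hpred
    intro hc
    rw [← hext_red i hi1 hi2'] at hc
    have hc2 := (cover_iff hrun hn (le_of_lt hj) (red (ext i s))).2 hc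
    rw [hpred] at hc2
    exact Bool.false_ne_true hc2

lemma term_iff (hrun : ∀ j' < k, greedyStep n (greedy n j') ≠ none) (hn : 2 ≤ n) :
    greedyStep n (greedy n k) = none ↔
      ∀ i, 1 ≤ i → i ≤ n → ∃ j' < k, ef n k j' = ered i (tauf n k k) := by
  rw [greedyStep_none_iff]
  have hlen : (greedy n k).length = n - 1 + k := run_len k hrun
  have hdef : (greedy n k).length - (n-1) = k := by omega
  rw [hdef]
  set s := (greedy n k).drop k with hs
  have hslen : s.length = n - 1 := by rw [hs, List.length_drop, hlen]; omega
  have hsnodup : s.Nodup := (List.drop_sublist _ _).nodup (run_nodup k hrun)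
  have hreds : red s = tauf n k k := by
    rw [tauf, ← hs, List.take_of_length_le (by omega)]
  rw [hslen, List.find?_eq_none]
  constructor
  · intro h i hi1 hi2
    have hmem : i ∈ List.range' 1 (n-1+1) := by
      rw [List.mem_range'_1]; omega
    have hcv := bool_nn (h i hmem)
    have hcov := (cover_iff hrun hn le_rfl (red (ext i s))).1 hcv
    rwa [red_ext hsnodup hi1 (by omega), hreds] at hcov
  · intro h i hmem
    rw [List.mem_range'_1] at hmem
    have h2 := h i (by omega) (by omega)
    rw [← hreds, ← red_ext hsnodup (by omega) (by omega)] at h2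
    exact bool_nn' ((cover_iff hrun hn le_rfl (red (ext i s))).2 h2)

lemma e_injOn (hrun : ∀ j' < k, greedyStep n (greedy n j') ≠ none) (hn : 2 ≤ n)
    {j j' : ℕ} (hj : j < k) (hj' : j' < k) (h : ef n k j = ef n k j') : j = j' := by
  by_contra hne
  wlog hlt : j' < j generalizing j j'
  · exact this hj' hj h.symm (Ne.symm hne) (by omega)
  obtain ⟨i, _, _, hei, _, hnotc⟩ := estep hrun hn hj
  exact hnotc ⟨j', hlt, by rw [h.symm, hei]⟩

end RunSeq
/-! ### counting and the main theorem -/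

lemma headI_mem_self {l : List ℕ} (h : l ≠ []) : l.headI ∈ l := by
  cases l with
  | nil => exact absurd rfl h
  | cons a t => exact List.mem_cons_self

lemma tail_eq_drop_one {l : List ℕ} : l.tail = l.drop 1 := by
  cases l <;> rfl

lemma getLast?_range'_one {n : ℕ} (hn : 1 ≤ n) : (List.range' 1 n).getLast? = some n := by
  have h : List.range' 1 n = List.range' 1 (n-1) ++ [1 + 1 * (n-1)] := by
    rw [← List.range'_concat]
    congr 1
    omega
  rw [h, List.getLast?_concat]
  congr 1
  omega

lemma red_drop1_range' {n : ℕ} (hn : 1 ≤ n) :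
    red ((List.range' 1 n).drop 1) = List.range' 1 (n-1) := by
  have h : List.range' 1 n = 1 :: List.range' 2 (n-1) := by
    have : List.range' 1 ((n-1)+1) 1 = 1 :: List.range' (1+1) (n-1) 1 := List.range'_succ
    rw [show (n-1) + 1 = n by omega] at this
    exact this
  rw [h, List.drop_one, List.tail_cons, red_range' 2 (n-1) (by omega)]

lemma list_filter_card (m : ℕ) (q : ℕ → Bool) :
    ((List.range m).filter q).length = ((Finset.range m).filter (fun j => q j = true)).card := by
  induction m with
  | zero => simp
  | succ m ih =>
    rw [Finset.range_add_one, List.range_succ, List.filter_append]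
    by_cases hq : q m = true
    · rw [Finset.filter_insert, if_pos hq, Finset.card_insert_of_notMem (by simp)]
      simp [hq, ih]
    · rw [Finset.filter_insert, if_neg hq]
      simp [hq, ih]

section Main

variable {n k : ℕ}

/-- the choice made at step `j+1` (the rank of the appended letter). -/
def chm (n k j : ℕ) : ℕ := ((ef n k j).getLast?).getD 0

lemma chm_of_ered {j i : ℕ} {t : List ℕ} (h : ef n k j = ered i t) : chm n k j = i := by
  rw [chm, h, ered_getLast?]
  rfl

lemma dep_e (hrun : ∀ j' < k, greedyStep n (greedy n j') ≠ none) (hn : 2 ≤ n)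
    {j : ℕ} (hj : j < k) (hτ : tauf n k j = tauf n k k) :
    ef n k j = ered (chm n k j) (tauf n k k) ∧ 1 ≤ chm n k j ∧ chm n k j ≤ n := by
  obtain ⟨i, hi1, hi2, hei, _, _⟩ := estep hrun hn hj
  rw [hτ] at hei
  have hc := chm_of_ered (k := k) hei
  rw [hc]
  exact ⟨hei, hi1, hi2⟩

lemma mem_dep_of_e (hrun : ∀ j' < k, greedyStep n (greedy n j') ≠ none) (hn : 2 ≤ n)
    {j i : ℕ} (hj : j < k) (h : ef n k j = ered i (tauf n k k)) :
    tauf n k j = tauf n k k := by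
  have h1 := tau_prefix (k := k) j hn
  rw [h] at h1
  rw [← h1]
  have hlen : (tauf n k k).length = n - 1 := tau_len hrun le_rfl
  rw [show (n-1) = (tauf n k k).length from hlen.symm, red_take_ered, tau_red]

theorem main_thm (hn : 2 ≤ n) (hk : 1 ≤ k)
    (hrun : ∀ j < k, greedyStep n (greedy n j) ≠ none) :
    (greedyStep n (greedy n k) = none ↔
      ((Finset.range (k+1)).filter (fun j => tauf n k j = tauf n k k)).card = n + 1) ∧
    (greedyStep n (greedy n k) = none ↔ ef n k (k-1) = List.range' 1 n) := by
  classical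
  set v := tauf n k k with hv
  set Dep := (Finset.range k).filter (fun j => tauf n k j = v) with hDep
  set Arr := (Finset.range k).filter (fun j => tauf n k (j+1) = v) with hArr
  set Occ := (Finset.range (k+1)).filter (fun j => tauf n k j = v) with hOcc
  have hdep_mem : ∀ j, j ∈ Dep ↔ (j < k ∧ tauf n k j = v) := by
    intro j; rw [hDep, Finset.mem_filter, Finset.mem_range]
  have harr_mem : ∀ j, j ∈ Arr ↔ (j < k ∧ tauf n k (j+1) = v) := by
    intro j; rw [hArr, Finset.mem_filter, Finset.mem_range]
  have hocc_mem : ∀ j, j ∈ Occ ↔ (j < k + 1 ∧ tauf n k j = v) := by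
    intro j; rw [hOcc, Finset.mem_filter, Finset.mem_range]
  -- departures are injectively labelled by their choices
  have hdep_inj : Set.InjOn (chm n k) Dep := by
    intro a ha b hb hab
    rw [Finset.mem_coe, hdep_mem] at ha hb
    obtain ⟨he1, _, _⟩ := dep_e hrun hn ha.1 ha.2
    obtain ⟨he2, _, _⟩ := dep_e hrun hn hb.1 hb.2
    refine e_injOn hrun hn ha.1 hb.1 ?_
    rw [he1, he2, hab]
  have hdep_maps : ∀ j ∈ Dep, chm n k j ∈ Finset.Icc 1 n := by
    intro j hj
    rw [hdep_mem] at hj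
    obtain ⟨_, h1, h2⟩ := dep_e hrun hn hj.1 hj.2
    rw [Finset.mem_Icc]
    exact ⟨h1, h2⟩
  have hIcc_card : (Finset.Icc 1 n).card = n := by rw [Nat.card_Icc]; omega
  have hdep_card_le : Dep.card ≤ n := by
    have := Finset.card_le_card_of_injOn (chm n k) hdep_maps hdep_inj
    omega
  -- arrivals are injectively labelled by their first letters
  have harr_card_le : Arr.card ≤ n := by
    have hmaps : ∀ j ∈ Arr, (ef n k j).headI ∈ Finset.Icc 1 n := by
      intro j hj
      rw [harr_mem] at hj
      have hlen : (ef n k j).length = n := e_len hrun hj.1 hn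
      have hne : ef n k j ≠ [] := by
        intro hc; rw [hc] at hlen; simp at hlen; omega
      have hmem := headI_mem_self hne
      rw [ef] at hmem
      have hb := mem_red_bounds hmem
      rw [Finset.mem_Icc]
      have hwl : (((greedy n k).drop j).take n).length = n := by
        rw [List.length_take, List.length_drop, run_len k hrun]
        omega
      rw [hwl] at hb
      exact hb
    have hinj : Set.InjOn (fun j => (ef n k j).headI) Arr := by
      intro a ha b hb hab
      rw [Finset.mem_coe, harr_mem] at ha hb
      have hlena : (ef n k a).length = n := e_len hrun ha.1 hn
      have hlenb : (ef n k b).length = n := e_len hrun hb.1 hn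
      have hnea : ef n k a ≠ [] := by intro hc; rw [hc] at hlena; simp at hlena; omega
      have hneb : ef n k b ≠ [] := by intro hc; rw [hc] at hlenb; simp at hlenb; omega
      refine e_injOn hrun hn ha.1 hb.1 ?_
      refine recon_eq (e_nodup hrun a) (e_nodup hrun b) (e_red a) (e_red b) hnea hneb hab ?_
      rw [tail_eq_drop_one, tail_eq_drop_one, ← tau_suffix, ← tau_suffix, ha.2, hb.2]
    have := Finset.card_le_card_of_injOn _ hmaps hinj
    omega
  -- occurrence count
  have hocc_card : Occ.card = Dep.card + 1 := by
    rw [hOcc, Finset.range_add_one, Finset.filter_insert, if_pos rfl,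
      Finset.card_insert_of_notMem (by
        intro hc
        rw [Finset.mem_filter, Finset.mem_range] at hc
        omega)]
  have hocc_sub : Occ ⊆ insert 0 (Finset.image (· + 1) Arr) := by
    intro j hj
    rw [hocc_mem] at hj
    rcases Nat.eq_zero_or_pos j with rfl | hpos
    · exact Finset.mem_insert_self _ _
    · refine Finset.mem_insert_of_mem ?_
      rw [Finset.mem_image]
      refine ⟨j - 1, ?_, by omega⟩
      rw [harr_mem]
      constructor
      · omega
      · rw [show j - 1 + 1 = j by omega]
        exact hj.2
  have hocc_le : Occ.card ≤ n + 1 := by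
    have h1 := Finset.card_le_card hocc_sub
    have h2 := Finset.card_insert_le 0 (Finset.image (· + 1) Arr)
    have h3 := Finset.card_image_le (s := Arr) (f := (· + 1))
    omega
  -- termination iff all choices used at v
  have hterm : greedyStep n (greedy n k) = none ↔ Finset.Icc 1 n ⊆ Finset.image (chm n k) Dep := by
    rw [term_iff hrun hn]
    constructor
    · intro h i hi
      rw [Finset.mem_Icc] at hi
      obtain ⟨j', hj', he⟩ := h i hi.1 hi.2
      rw [Finset.mem_image]
      refine ⟨j', ?_, chm_of_ered (k := k) he⟩
      rw [hdep_mem]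
      exact ⟨hj', mem_dep_of_e hrun hn hj' he⟩
    · intro h i hi1 hi2
      have := h (Finset.mem_Icc.2 ⟨hi1, hi2⟩)
      rw [Finset.mem_image] at this
      obtain ⟨j, hjd, hcj⟩ := this
      rw [hdep_mem] at hjd
      obtain ⟨he, _, _⟩ := dep_e hrun hn hjd.1 hjd.2
      exact ⟨j, hjd.1, by rw [he, hcj]⟩
  -- first iff
  have hiff1 : greedyStep n (greedy n k) = none ↔ Occ.card = n + 1 := by
    constructor
    · intro h
      have hsub := hterm.1 h
      have h1 : n ≤ (Finset.image (chm n k) Dep).card := by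
        have := Finset.card_le_card hsub
        omega
      have h2 := Finset.card_image_le (s := Dep) (f := chm n k)
      omega
    · intro h
      have hdep_card : Dep.card = n := by omega
      refine hterm.2 ?_
      have himg_card : (Finset.image (chm n k) Dep).card = n := by
        rw [Finset.card_image_of_injOn hdep_inj, hdep_card]
      have hsub : Finset.image (chm n k) Dep ⊆ Finset.Icc 1 n := by
        intro i hi
        rw [Finset.mem_image] at hi
        obtain ⟨j, hj, rfl⟩ := hi
        exact hdep_maps j hj
      rw [Finset.eq_of_subset_of_card_le hsub (by omega)]
  -- termination forces v to be the identity
  have hv_id : greedyStep n (greedy n k) = none → v = List.range' 1 (n-1) := by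
    intro h
    have hocc := hiff1.1 h
    by_contra hne
    have h0 : (0 : ℕ) ∉ Occ := by
      rw [hocc_mem]
      rintro ⟨_, hc⟩
      rw [tau0 hrun hn] at hc
      exact hne hc.symm
    have hsub2 : Occ ⊆ Finset.image (· + 1) Arr := by
      intro j hj
      have := hocc_sub hj
      rw [Finset.mem_insert] at this
      rcases this with rfl | hmem
      · exact absurd hj h0
      · exact hmem
    have h1 := Finset.card_le_card hsub2
    have h3 := Finset.card_image_le (s := Arr) (f := (· + 1))
    omega
  constructor
  · exact hiff1.trans (by rw [hOcc])
  constructor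
  · -- termination → σ_k increasing
    intro h
    have hvid := hv_id h
    have hocc := hiff1.1 h
    have hdep_card : Dep.card = n := by omega
    have himg : Finset.image (chm n k) Dep = Finset.Icc 1 n := by
      refine Finset.eq_of_subset_of_card_le ?_ ?_
      · intro i hi
        rw [Finset.mem_image] at hi
        obtain ⟨j, hj, rfl⟩ := hi
        exact hdep_maps j hj
      · rw [Finset.card_image_of_injOn hdep_inj, hdep_card, hIcc_card]
    have hn_mem : n ∈ Finset.image (chm n k) Dep := by
      rw [himg, Finset.mem_Icc]; omega
    rw [Finset.mem_image] at hn_mem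
    obtain ⟨jn, hjn_dep, hcjn⟩ := hn_mem
    rw [hdep_mem] at hjn_dep
    obtain ⟨hejn, _, _⟩ := dep_e hrun hn hjn_dep.1 hjn_dep.2
    rw [hcjn] at hejn
    have hvid' : tauf n k k = List.range' 1 (n-1) := by rw [← hv]; exact hvid
    have hejn' : ef n k jn = List.range' 1 n := by
      rw [hejn, hvid', ered_top_identity (by omega)]
    -- jn is the last departure
    obtain ⟨i, hi1, hi2, hei, hminim, _⟩ := estep hrun hn hjn_dep.1
    have hieq : i = n := by
      rw [hjn_dep.2] at hei
      exact ered_i_eq (hei.symm.trans hejn)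
    have hlast_dep : ∀ j, j < k → tauf n k j = v → j ≤ jn := by
      intro j hj hτ
      obtain ⟨hej, hc1, hc2⟩ := dep_e hrun hn hj hτ
      rcases Nat.lt_or_ge (chm n k j) n with hlt | hge
      · obtain ⟨j', hj', hej'⟩ := hminim (chm n k j) hc1 (by omega)
        rw [hjn_dep.2] at hej'
        have : j = j' := e_injOn hrun hn hj (by omega) (by rw [hej, hej'])
        omega
      · have hcn : chm n k j = n := by omega
        have : j = jn := e_injOn hrun hn hj hjn_dep.1 (by rw [hej, hcn, hejn])
        omega
    have hτ_next : tauf n k (jn + 1) = v := by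
      rw [tau_suffix, hejn', red_drop1_range' (by omega)]
      exact hvid.symm
    have hjn1 : jn + 1 = k := by
      by_contra hc
      have hlt : jn + 1 < k := by omega
      have := hlast_dep (jn+1) hlt hτ_next
      omega
    rw [show k - 1 = jn by omega]
    exact hejn'
  · -- σ_k increasing → termination
    intro hsig
    have hj0 : k - 1 < k := by omega
    obtain ⟨i, hi1, hi2, hei, hminim, _⟩ := estep hrun hn hj0
    have hieq : i = n := by
      have h1 := hei ▸ ered_getLast? i (tauf n k (k-1))
      rw [hsig, getLast?_range'_one (by omega : 1 ≤ n)] at h1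
      exact (Option.some_injective _ h1).symm
    have hτj0 : tauf n k (k-1) = List.range' 1 (n-1) := by
      have h1 := tau_prefix (k := k) (k-1) hn
      rw [hsig, take_range'_1, show min (n-1) n = n - 1 by omega, red_range'_1] at h1
      exact h1.symm
    have ht1 : tauf n k ((k-1)+1) = List.range' 1 (n-1) := by
      rw [tau_suffix, hsig, red_drop1_range' (by omega : 1 ≤ n)]
    have hτk : tauf n k k = List.range' 1 (n-1) := by
      have h' : k = (k-1)+1 := by omega
      nth_rewrite 2 [h']
      exact ht1
    rw [term_iff hrun hn]
    intro i' hi'1 hi'2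
    rcases Nat.lt_or_ge i' n with hlt | hge
    · obtain ⟨j', hj', hej'⟩ := hminim i' hi'1 (by omega)
      refine ⟨j', by omega, ?_⟩
      rw [hej', hτj0, ← hτk]
    · have hi'n : i' = n := by omega
      refine ⟨k-1, hj0, ?_⟩
      rw [hi'n, hsig, hτk, ered_top_identity (by omega : 1 ≤ n)]

end Main

/-- With `σ'_j = red(a_{j+1}⋯a_{j+n-1})` and
`J_k = |{j ≤ k : σ'_j = σ'_k}|`, the greedy algorithm terminates at step `k`
iff `J_k = n+1`, iff `σ_k = 12⋯n`. -/
theorem stmt4 (n : ℕ) (hn : 2 ≤ n) (k : ℕ) (hk : 1 ≤ k)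
    (hrun : ∀ j < k, greedyStep n (greedy n j) ≠ none) :
    (greedyStep n (greedy n k) = none ↔
      ((List.range (k + 1)).filter (fun j =>
          red (((greedy n k).drop j).take (n - 1)) =
          red (((greedy n k).drop k).take (n - 1)))).length = n + 1) ∧
    (greedyStep n (greedy n k) = none ↔
      sigma (greedy n k) n k = List.range' 1 n) := by
  obtain ⟨h1, h2⟩ := main_thm hn hk hrun
  constructor
  · rw [h1]
    have hbr := list_filter_card (k+1) (fun j =>
      decide (red (((greedy n k).drop j).take (n - 1)) =
        red (((greedy n k).drop k).take (n - 1))))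
    rw [hbr]
    have : ((Finset.range (k+1)).filter (fun j =>
        (decide (red (((greedy n k).drop j).take (n - 1)) =
          red (((greedy n k).drop k).take (n - 1)))) = true)).card =
        ((Finset.range (k+1)).filter (fun j => tauf n k j = tauf n k k)).card := by
      congr 1
      apply Finset.filter_congr
      intro j _
      rw [decide_eq_true_eq]
      exact Iff.rfl
    rw [this]
  · exact h2
end

section
/- The word Π'_n output by the greedy algorithm covers every permutation of length n; that is, for every n-permutation π there is a factor of Π'_n of length n whose reduced form is π. -/
namespace SG


/-- rank of `x` in `w`. -/
def rk (w : List ℕ) (x : ℕ) : ℕ := w.countP (fun y => y ≤ x)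

lemma red_eq_map_rk (w : List ℕ) : red w = w.map (rk w) := by
  unfold red rk
  simp [List.countP_eq_length_filter]

@[simp] lemma red_length (w : List ℕ) : (red w).length = w.length := by
  rw [red_eq_map_rk]; simp

lemma countP_eq_of_pointwise (p q : ℕ → Bool) :
    ∀ (u v : List ℕ), u.length = v.length →
    (∀ j (h : j < u.length) (h' : j < v.length), p u[j] = q v[j]) →
    u.countP p = v.countP q := by
  intro u
  induction u with
  | nil => intro v hv _; simp [(List.length_eq_zero_iff.mp hv.symm)]
  | cons a u ih =>
    intro v hv hpt
    cases v with
    | nil => simp at hv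
    | cons b v =>
      simp only [List.countP_cons]
      have h0 := hpt 0 (by simp) (by simp)
      simp only [List.getElem_cons_zero] at h0
      rw [ih v (by simpa using hv) (fun j hj hj' => by
        exact hpt (j+1) (by simpa using hj) (by simpa using hj')), h0]

lemma rk_getElem (u : List ℕ) (x : ℕ) : rk u x = u.countP (fun y => y ≤ x) := rfl

lemma red_getElem (u : List ℕ) (i : ℕ) (h : i < (red u).length) :
    (red u)[i] = rk u (u[i]'(by simpa using h)) := by
  simp only [red_eq_map_rk, List.getElem_map]

/-- `red` only depends on the comparison pattern. -/
lemma red_congr {u v : List ℕ} (hl : u.length = v.length)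
    (hc : ∀ i j (hi : i < u.length) (hj : j < u.length),
      (u[i] ≤ u[j] ↔ v[i]'(hl ▸ hi) ≤ v[j]'(hl ▸ hj))) :
    red u = red v := by
  apply List.ext_getElem (by simp [hl])
  intro i h1 h2
  rw [red_getElem _ _ h1, red_getElem _ _ h2]
  exact countP_eq_of_pointwise _ _ u v hl (fun j hj hj' => by
    simp only [decide_eq_decide]
    exact hc j i hj (by simpa using h1))

lemma rk_mono (w : List ℕ) {x y : ℕ} (h : x ≤ y) : rk w x ≤ rk w y := by
  apply List.countP_mono_left
  intro a _ ha
  simpa using le_trans (by simpa using ha) h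

lemma rk_strict (w : List ℕ) {x y : ℕ} (hy : y ∈ w) (h : x < y) : rk w x < rk w y := by
  induction w with
  | nil => simp at hy
  | cons a w ih =>
    have hmono : rk w x ≤ rk w y := rk_mono w h.le
    have hc : rk (a :: w) x = rk w x + if a ≤ x then 1 else 0 := by
      simp [rk, List.countP_cons]
    have hc' : rk (a :: w) y = rk w y + if a ≤ y then 1 else 0 := by
      simp [rk, List.countP_cons]
    rcases List.mem_cons.mp hy with hya | hy'
    · rw [hc, hc']
      have h1 : ¬ a ≤ x := by omega
      have h2 : a ≤ y := le_of_eq hya.symm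
      simp only [if_neg h1, if_pos h2]
      omega
    · have hih := ih hy'
      rw [hc, hc']
      by_cases hax : a ≤ x
      · simp only [if_pos hax, if_pos (le_trans hax h.le)]; omega
      · simp only [if_neg hax]
        split <;> omega

lemma rk_iff (w : List ℕ) {x y : ℕ} (hx : x ∈ w) (hy : y ∈ w) :
    x ≤ y ↔ rk w x ≤ rk w y := by
  constructor
  · exact rk_mono w
  · intro h
    by_contra hxy
    have := rk_strict w hx (by omega : y < x)
    omega

/-- comparisons in `red u` match those in `u`. -/
lemma red_cmp (u : List ℕ) (i j : ℕ) (hi : i < u.length) (hj : j < u.length) :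
    u[i] ≤ u[j] ↔ (red u)[i]'(by simpa using hi) ≤ (red u)[j]'(by simpa using hj) := by
  rw [red_getElem _ _ (by simpa using hi), red_getElem _ _ (by simpa using hj)]
  exact rk_iff u (u.getElem_mem hi) (u.getElem_mem hj)

lemma red_red (u : List ℕ) : red (red u) = red u := by
  apply red_congr (by simp)
  intro i j hi hj
  exact (red_cmp u i j (by simpa using hi) (by simpa using hj)).symm

lemma red_take (u : List ℕ) (j : ℕ) : red ((red u).take j) = red (u.take j) := by
  apply red_congr (by simp)
  intro a b ha hb
  have ha' : a < u.length := by simp [List.length_take] at ha; omega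
  have hb' : b < u.length := by simp [List.length_take] at hb; omega
  simp only [List.getElem_take]
  exact (red_cmp u a b ha' hb').symm

lemma red_drop (u : List ℕ) (j : ℕ) : red ((red u).drop j) = red (u.drop j) := by
  apply red_congr (by simp)
  intro a b ha hb
  have ha' : j + a < u.length := by simp at ha; omega
  have hb' : j + b < u.length := by simp at hb; omega
  simp only [List.getElem_drop]
  exact (red_cmp u (j+a) (j+b) ha' hb').symm

lemma red_map_of (u : List ℕ) (φ : ℕ → ℕ)
    (h : ∀ x ∈ u, ∀ y ∈ u, (x ≤ y ↔ φ x ≤ φ y)) :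
    red (u.map φ) = red u := by
  apply red_congr (by simp)
  intro i j hi hj
  have hi' : i < u.length := by simpa using hi
  have hj' : j < u.length := by simpa using hj
  simp only [List.getElem_map]
  exact (h _ (u.getElem_mem hi') _ (u.getElem_mem hj')).symm

lemma cshift_le_iff (b x y : ℕ) : x ≤ y ↔ cshift b x ≤ cshift b y := by
  unfold cshift; split <;> split <;> omega

lemma cshift_lt_self_iff (b x : ℕ) : cshift b x ≤ b ↔ x < b := by
  unfold cshift; split <;> omega

lemma le_cshift_iff (b x : ℕ) : b ≤ cshift b x ↔ b ≤ x := by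
  unfold cshift; split <;> omega

lemma cshift_ne (b x : ℕ) : cshift b x ≠ b := by
  unfold cshift; split <;> omega

lemma cshift_injective (b : ℕ) : Function.Injective (cshift b) := by
  intro x y h
  have h1 := cshift_le_iff b x y
  have h2 := cshift_le_iff b y x
  omega

lemma red_map_cshift (u : List ℕ) (b : ℕ) : red (u.map (cshift b)) = red u :=
  red_map_of u _ (fun x _ y _ => cshift_le_iff b x y)

lemma nodup_red {u : List ℕ} (h : u.Nodup) : (red u).Nodup := by
  rw [List.Nodup, List.pairwise_iff_getElem]
  intro i j hi hj hij
  have hi' : i < u.length := by simpa using hi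
  have hj' : j < u.length := by simpa using hj
  have hne : u[i] ≠ u[j] := by
    have := (List.pairwise_iff_getElem.mp h) i j hi' hj' hij
    exact this
  rw [red_getElem _ _ hi, red_getElem _ _ hj]
  rcases Nat.lt_or_ge (u[i]'hi') (u[j]'hj') with hlt | hge
  · exact Nat.ne_of_lt (rk_strict u (u.getElem_mem hj') hlt)
  · have : u[j]'hj' < u[i]'hi' := by omega
    exact (Nat.ne_of_lt (rk_strict u (u.getElem_mem hi') this)).symm

lemma mem_red {u : List ℕ} {x : ℕ} (h : x ∈ red u) : 1 ≤ x ∧ x ≤ u.length := by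
  rw [red_eq_map_rk] at h
  rcases List.mem_map.mp h with ⟨y, hy, rfl⟩
  constructor
  · exact List.countP_pos_iff.mpr ⟨y, hy, by simp⟩
  · exact List.countP_le_length

lemma red_perm_range' {u : List ℕ} (h : u.Nodup) : (red u).Perm (List.range' 1 u.length) := by
  apply List.Subperm.perm_of_length_le
  · apply List.Nodup.subperm (nodup_red h)
    intro x hx
    have := mem_red hx
    rw [List.mem_range'_1]
    omega
  · simp

lemma rk_range' (L x : ℕ) : rk (List.range' 1 L) x = min x L := by
  induction L with
  | zero => simp [rk]
  | succ L ih =>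
    rw [List.range'_concat]
    unfold rk at *
    rw [List.countP_append, ih]
    by_cases h : 1 + L ≤ x <;> simp [h] <;> omega

lemma red_of_perm_range' {p : List ℕ} {L : ℕ} (h : p.Perm (List.range' 1 L)) : red p = p := by
  rw [red_eq_map_rk]
  have : ∀ x ∈ p, rk p x = x := by
    intro x hx
    have hx' : x ∈ List.range' 1 L := h.mem_iff.mp hx
    rw [List.mem_range'_1] at hx'
    unfold rk
    rw [h.countP_eq]
    have := rk_range' L x
    unfold rk at this
    omega
  rw [List.map_congr_left this]
  simp

lemma red_range' (a m : ℕ) : red (List.range' a m) = List.range' 1 m := by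
  have h1 : red (List.range' a m) = red (List.range' 1 m) := by
    apply red_congr (by simp)
    intro i j hi hj
    simp only [List.getElem_range']
    omega
  rw [h1, red_of_perm_range' (List.Perm.refl _)]

lemma sorted_rank {t : List ℕ} (hs : List.Pairwise (· ≤ ·) t) {i : ℕ} (hi : i < t.length) (x : ℕ) :
    t[i] ≤ x ↔ i + 1 ≤ rk t x := by
  have hp := List.pairwise_iff_getElem.mp hs
  constructor
  · intro h
    have hsplit : rk t x = rk (t.take (i+1)) x + rk (t.drop (i+1)) x := by
      unfold rk
      rw [← List.countP_append, List.take_append_drop]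
    have hall : rk (t.take (i+1)) x = (t.take (i+1)).length := by
      unfold rk
      rw [List.countP_eq_length]
      intro a ha
      rcases List.mem_iff_getElem.mp ha with ⟨j, hj, rfl⟩
      have hj' : j < t.length := by simp at hj; omega
      simp only [List.getElem_take]
      have : t[j]'hj' ≤ t[i]'hi := by
        rcases Nat.lt_or_ge j i with h1 | h1
        · exact hp j i hj' hi h1
        · have : j = i := by simp [List.length_take] at hj; omega
          subst this; exact le_refl _
      simp only [decide_eq_true_eq]
      omega
    have hlen : (t.take (i+1)).length = i + 1 := by simp [List.length_take]; omega
    omega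
  · intro h
    by_contra hc
    push_neg at hc
    have hsplit : rk t x = rk (t.take i) x + rk (t.drop i) x := by
      unfold rk
      rw [← List.countP_append, List.take_append_drop]
    have hzero : rk (t.drop i) x = 0 := by
      unfold rk
      rw [List.countP_eq_zero]
      intro a ha
      rcases List.mem_iff_getElem.mp ha with ⟨j, hj, rfl⟩
      simp only [List.getElem_drop]
      have hij : i + j < t.length := by simp at hj; omega
      have : t[i]'hi ≤ t[i+j]'hij := by
        rcases Nat.eq_or_lt_of_le (Nat.le_add_right i j) with h1 | h1
        · exact le_of_eq (by congr 1)
        · exact hp i (i+j) hi hij h1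
      simp only [decide_eq_true_eq]
      omega
    have : rk (t.take i) x ≤ i := le_trans (List.countP_le_length) (by simp [List.length_take])
    omega

lemma rk_insertionSort (s : List ℕ) (x : ℕ) : rk (List.insertionSort (· ≤ ·) s) x = rk s x :=
  (List.perm_insertionSort _ s).countP_eq _

lemma extb_le_iff {s : List ℕ} {i : ℕ} (h1 : 1 ≤ i) (h2 : i ≤ s.length) (x : ℕ) :
    extb s i ≤ x ↔ i ≤ rk s x := by
  have hb : extb s i = nthSmallest s i := by unfold extb; rw [if_pos h2]
  set t := List.insertionSort (· ≤ ·) s with ht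
  have hlen : t.length = s.length := by simp [ht]
  have hi : i - 1 < t.length := by omega
  have hget : nthSmallest s i = t[i-1] := by
    unfold nthSmallest
    rw [← ht, List.getD_eq_getElem _ _ hi]
  rw [hb, hget, sorted_rank (List.pairwise_insertionSort _ s) hi x, ← rk_insertionSort s x, ← ht]
  omega

lemma le_foldr_max {s : List ℕ} {x : ℕ} (h : x ∈ s) : x ≤ s.foldr max 0 := by
  induction s with
  | nil => simp at h
  | cons a s ih =>
    rcases List.mem_cons.mp h with rfl | h'
    · simp only [List.foldr_cons]; omega
    · have := ih h'
      simp only [List.foldr_cons]; omega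

lemma foldr_max_le {s : List ℕ} {x : ℕ} (h : ∀ y ∈ s, y ≤ x) : s.foldr max 0 ≤ x := by
  induction s with
  | nil => simp
  | cons a s ih =>
    have := ih (fun y hy => h y (List.mem_cons_of_mem a hy))
    have := h a (List.mem_cons_self)
    simp [List.foldr_cons]; omega

lemma extb_top (s : List ℕ) : extb s (s.length + 1) = s.foldr max 0 + 1 := by
  unfold extb; rw [if_neg (by omega)]

lemma sorted_range' (a m : ℕ) : List.Pairwise (· ≤ ·) (List.range' a m) := by
  rw [List.pairwise_iff_getElem]
  intro i j hi hj hij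
  simp only [List.getElem_range']
  omega

lemma sort_of_perm_range' {q : List ℕ} {L : ℕ} (h : q.Perm (List.range' 1 L)) :
    List.insertionSort (· ≤ ·) q = List.range' 1 L :=
  List.Perm.eq_of_pairwise' (List.pairwise_insertionSort _ q) (sorted_range' 1 L)
    ((List.perm_insertionSort _ q).trans h)

lemma foldr_max_perm_range' {q : List ℕ} {L : ℕ} (h : q.Perm (List.range' 1 L)) :
    q.foldr max 0 = L := by
  rcases Nat.eq_zero_or_pos L with rfl | hL
  · have : q = [] := List.eq_nil_of_length_eq_zero (by simpa using h.length_eq)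
    simp [this]
  · have hmem : L ∈ q := h.mem_iff.mpr (by rw [List.mem_range'_1]; omega)
    have h1 := le_foldr_max hmem
    have h2 : ∀ y ∈ q, y ≤ L := by
      intro y hy
      have := h.mem_iff.mp hy
      rw [List.mem_range'_1] at this
      omega
    exact le_antisymm (foldr_max_le h2) h1

lemma extb_red {q : List ℕ} {L i : ℕ} (h : q.Perm (List.range' 1 L))
    (h1 : 1 ≤ i) (h2 : i ≤ L + 1) : extb q i = i := by
  have hlen : q.length = L := by simpa using h.length_eq
  rcases Nat.lt_or_ge L i with hc | hc
  · have : i = L + 1 := by omega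
    subst this
    rw [← hlen, extb_top, foldr_max_perm_range' h]
    omega
  · unfold extb nthSmallest
    rw [if_pos (by omega), sort_of_perm_range' h,
      List.getD_eq_getElem _ _ (by simp; omega), List.getElem_range']
    omega

@[simp] lemma ext_length (i : ℕ) (s : List ℕ) : (ext i s).length = s.length + 1 := by
  unfold ext; simp

lemma ext_take (i : ℕ) (s : List ℕ) : (ext i s).take s.length = s.map (cshift (extb s i)) := by
  unfold ext
  rw [show s.length = (s.map (cshift (extb s i))).length by simp, List.take_left]

lemma ext_getElem_last (i : ℕ) (s : List ℕ) (h : s.length < (ext i s).length) :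
    (ext i s)[s.length] = extb s i := by
  simp [ext]

lemma ext_getElem_lt (i : ℕ) (s : List ℕ) {p : ℕ} (h : p < s.length) (h' : p < (ext i s).length) :
    (ext i s)[p] = cshift (extb s i) s[p] := by
  simp [ext, h]

lemma ext_red_eq (i : ℕ) {q L : ℕ} {s : List ℕ} : True := trivial

lemma ext_of_perm {q : List ℕ} {L i : ℕ} (h : q.Perm (List.range' 1 L))
    (h1 : 1 ≤ i) (h2 : i ≤ L + 1) :
    ext i q = q.map (cshift i) ++ [i] := by
  unfold ext; rw [extb_red h h1 h2]

lemma ext_perm_range' {q : List ℕ} {L i : ℕ} (h : q.Perm (List.range' 1 L))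
    (h1 : 1 ≤ i) (h2 : i ≤ L + 1) :
    (ext i q).Perm (List.range' 1 (L + 1)) := by
  rw [ext_of_perm h h1 h2]
  have hlen : q.length = L := by simpa using h.length_eq
  have hperm : (q.map (cshift i) ++ [i]).Perm (i :: q.map (cshift i)) :=
    List.perm_append_singleton _ _
  apply hperm.trans
  apply List.Subperm.perm_of_length_le
  · apply List.Nodup.subperm
    · rw [List.nodup_cons]
      constructor
      · intro hc
        rcases List.mem_map.mp hc with ⟨y, _, hy⟩
        exact cshift_ne i y hy
      · exact List.Nodup.map (cshift_injective i) (h.nodup_iff.mpr List.nodup_range')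
    · intro x hx
      rcases List.mem_cons.mp hx with rfl | hx'
      · rw [List.mem_range'_1]; omega
      · rcases List.mem_map.mp hx' with ⟨y, hy, rfl⟩
        have := List.mem_range'_1.mp (h.mem_iff.mp hy)
        rw [List.mem_range'_1]
        unfold cshift; split <;> omega
  · simp [hlen]

lemma bridge {s : List ℕ} {i : ℕ} (h1 : 1 ≤ i) (h2 : i ≤ s.length + 1) {e : ℕ} (he : e ∈ s) :
    extb s i ≤ e ↔ i ≤ rk s e := by
  rcases Nat.lt_or_ge s.length i with hc | hc
  · have : i = s.length + 1 := by omega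
    subst this
    rw [extb_top]
    have hle := le_foldr_max he
    have hrk : rk s e ≤ s.length := List.countP_le_length
    omega
  · exact extb_le_iff h1 hc e

lemma red_ext {s : List ℕ} {i : ℕ} (hnd : s.Nodup) (h1 : 1 ≤ i) (h2 : i ≤ s.length + 1) :
    red (ext i s) = ext i (red s) := by
  set L := s.length with hL
  set b := extb s i with hb
  have hq : (red s).Perm (List.range' 1 L) := red_perm_range' hnd
  rw [ext_of_perm hq h1 (by simpa using h2)]
  have hstep1 : red (ext i s) = red ((red s).map (cshift i) ++ [i]) := by
    apply red_congr (by simp)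
    intro p r hp hr
    have hp' : p < L + 1 := by simpa using hp
    have hr' : r < L + 1 := by simpa using hr
    rcases Nat.lt_or_ge p L with hpL | hpL <;> rcases Nat.lt_or_ge r L with hrL | hrL
    · -- both < L
      rw [ext_getElem_lt i s hpL, ext_getElem_lt i s hrL,
        List.getElem_append_left (by simpa using hpL),
        List.getElem_append_left (by simpa using hrL),
        List.getElem_map, List.getElem_map,
        red_getElem _ _ (by simpa using hpL), red_getElem _ _ (by simpa using hrL)]
      rw [← cshift_le_iff, ← cshift_le_iff]
      exact rk_iff s (s.getElem_mem hpL) (s.getElem_mem hrL)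
    · -- p < L, r = L
      have hrL' : r = L := by omega
      subst hrL'
      rw [ext_getElem_lt i s hpL, show (ext i s)[L]'(by simp; omega) = b from ext_getElem_last i s (by simp),
        List.getElem_append_left (by simpa using hpL),
        List.getElem_append_right (by simp; omega) (h₂ := by simp; omega),
        List.getElem_map, red_getElem _ _ (by simpa using hpL)]
      simp only [red_length, Nat.sub_self, List.getElem_singleton]
      rw [cshift_lt_self_iff, cshift_lt_self_iff]
      have := bridge h1 h2 (s.getElem_mem hpL)
      omega
    · -- p = L, r < L
      have hpL' : p = L := by omega
      subst hpL'
      have e1 : (ext i s)[L]'(by simp; omega) = b := ext_getElem_last i s (by simp)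
      have e2 : (ext i s)[r]'(by simpa using hr') = cshift b (s[r]'hrL) := ext_getElem_lt i s hrL _
      have e3 : ((red s).map (cshift i) ++ [i])[L]'(by simp; omega) = i := by
        rw [List.getElem_append_right (by simp; omega)]
        simp
      have e4 : ((red s).map (cshift i) ++ [i])[r]'(by simp; omega) = cshift i (rk s (s[r]'hrL)) := by
        rw [List.getElem_append_left (by simpa using hrL), List.getElem_map,
          red_getElem _ _ (by simpa using hrL)]
      rw [e1, e2, e3, e4, le_cshift_iff, le_cshift_iff]
      exact bridge h1 h2 (s.getElem_mem hrL)
    · -- both = L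
      have : p = L ∧ r = L := by omega
      obtain ⟨rfl, rfl⟩ := this
      simp
  rw [hstep1]
  have := ext_perm_range' hq h1 (by simpa using h2)
  rw [ext_of_perm hq h1 (by simpa using h2)] at this
  exact red_of_perm_range' this

lemma unreduce {u : List ℕ} {a n : ℕ} (h : (a :: u).Perm (List.range' 1 n)) :
    u = (red u).map (cshift a) := by
  have hnd : (a :: u).Nodup := h.nodup_iff.mpr List.nodup_range'
  have hau : a ∉ u := (List.nodup_cons.mp hnd).1
  have hlen : u.length + 1 = n := by simpa using h.length_eq
  have key : ∀ x ∈ u, cshift a (rk u x) = x := by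
    intro x hx
    have hxr : x ∈ List.range' 1 n := h.mem_iff.mp (List.mem_cons_of_mem a hx)
    rw [List.mem_range'_1] at hxr
    have hax : a ≠ x := fun hc => hau (hc ▸ hx)
    have hcnt : rk (a :: u) x = min x n := by
      unfold rk; rw [h.countP_eq]
      exact rk_range' n x
    have hcons : rk (a :: u) x = rk u x + if a ≤ x then 1 else 0 := by
      simp [rk, List.countP_cons]
    have : rk u x = x - (if a ≤ x then 1 else 0) := by omega
    unfold cshift
    split_ifs at this ⊢ <;> omega
  rw [red_eq_map_rk, List.map_map]
  conv_lhs => rw [show u = u.map id from (List.map_id u).symm]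
  exact List.map_congr_left (fun x hx => ((key x hx).symm : id x = _))

lemma perm_cons_of_append {u : List ℕ} {a : ℕ} {l : List ℕ} (h : (u ++ [a]).Perm l) :
    (a :: u).Perm l := ((List.perm_append_singleton a u).symm.trans h)

/-- every reduced `n`-permutation is `ext a q` of its prefix pattern, `a` its last letter. -/
lemma eq_ext {p : List ℕ} {n : ℕ} (hn : 1 ≤ n) (h : p.Perm (List.range' 1 n)) :
    p = ext (p.getD (n-1) 0) (red (p.take (n-1))) ∧
    (red (p.take (n-1))).Perm (List.range' 1 (n-1)) ∧
    1 ≤ p.getD (n-1) 0 ∧ p.getD (n-1) 0 ≤ n := by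
  have hlen : p.length = n := by simpa using h.length_eq
  have hn1 : n - 1 < p.length := by omega
  set a := p.getD (n-1) 0 with ha
  have ha' : a = p[n-1] := List.getD_eq_getElem p 0 hn1
  have hmem : a ∈ p := ha' ▸ List.getElem_mem hn1
  have hrange := List.mem_range'_1.mp (h.mem_iff.mp hmem)
  set u := p.take (n-1) with hu
  have hulen : u.length = n - 1 := by simp [hu, hlen]
  have hsplit : p = u ++ [a] := by
    rw [hu, ha']
    conv_lhs => rw [← List.take_append_drop (n-1) p]
    congr 1
    rw [List.drop_eq_getElem_cons hn1, List.drop_eq_nil_of_le (by omega)]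
  have hperm : (a :: u).Perm (List.range' 1 n) := perm_cons_of_append (hsplit ▸ h)
  have hundup : u.Nodup := by
    have := hperm.nodup_iff.mpr List.nodup_range'
    exact (List.nodup_cons.mp this).2
  have hq : (red u).Perm (List.range' 1 (n-1)) := hulen ▸ red_perm_range' hundup
  have hextb : extb (red u) a = a := extb_red hq (by omega) (by omega)
  refine ⟨?_, hq, by omega, by omega⟩
  rw [ext_of_perm hq (by omega) (by omega), ← unreduce hperm, ← hsplit]

/-- every reduced `n`-permutation is determined by first letter + suffix pattern. -/
lemma eq_lext {p : List ℕ} {n : ℕ} (hn : 1 ≤ n) (h : p.Perm (List.range' 1 n)) :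
    p = p.getD 0 0 :: (red (p.drop 1)).map (cshift (p.getD 0 0)) ∧
    (red (p.drop 1)).Perm (List.range' 1 (n-1)) ∧
    1 ≤ p.getD 0 0 ∧ p.getD 0 0 ≤ n := by
  have hlen : p.length = n := by simpa using h.length_eq
  cases p with
  | nil => simp at hlen; omega
  | cons a u =>
    have hperm : (a :: u).Perm (List.range' 1 n) := h
    have hundup : u.Nodup := by
      have := hperm.nodup_iff.mpr List.nodup_range'
      exact (List.nodup_cons.mp this).2
    have hulen : u.length = n - 1 := by simp at hlen; omega
    have hmem : a ∈ List.range' 1 n := h.mem_iff.mp (List.mem_cons_self)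
    rw [List.mem_range'_1] at hmem
    refine ⟨?_, hulen ▸ red_perm_range' hundup, by simpa using hmem.1, by simp; omega⟩
    simp only [List.drop_succ_cons, List.drop_zero, List.getD_cons_zero]
    rw [← unreduce hperm]

lemma ext_inj {q q' : List ℕ} {n i i' : ℕ}
    (hq : q.Perm (List.range' 1 (n-1))) (hq' : q'.Perm (List.range' 1 (n-1)))
    (hi : 1 ≤ i) (hi2 : i ≤ n) (hi' : 1 ≤ i') (hi2' : i' ≤ n) (hn : 1 ≤ n)
    (h : ext i q = ext i' q') : i = i' ∧ q = q' := by
  have hql : q.length = n - 1 := by simpa using hq.length_eq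
  have hql' : q'.length = n - 1 := by simpa using hq'.length_eq
  rw [ext_of_perm hq hi (by omega), ext_of_perm hq' hi' (by omega)] at h
  have hii : i = i' := by
    have := congrArg (fun l => l.getD (n-1) 0) h
    simpa [List.getD_append_right, hql, hql'] using this
  subst hii
  refine ⟨rfl, ?_⟩
  have := List.append_inj_left h (by simp [hql, hql'])
  exact List.map_injective_iff.mpr (cshift_injective i) this


lemma coversB_iff {w : List ℕ} {n : ℕ} (hn : 1 ≤ n) (p : List ℕ) :
    coversB w n p = true ↔ covers w n p := by
  unfold coversB covers
  rw [List.any_eq_true]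
  constructor
  · rintro ⟨k, hk, h⟩
    rw [Bool.and_eq_true, decide_eq_true_eq, decide_eq_true_eq] at h
    exact ⟨k, h.1, h.2⟩
  · rintro ⟨k, hk, h⟩
    exact ⟨k, List.mem_range.mpr (by omega), by simp [hk, h]⟩

lemma find?_range'_min {p : ℕ → Bool} :
    ∀ {m a i : ℕ}, (List.range' a m).find? p = some i → ∀ j, a ≤ j → j < i → p j = false := by
  intro m
  induction m with
  | zero => intro a i h; simp at h
  | succ m ih =>
    intro a i h j haj hji
    rw [List.range'_succ, List.find?_cons] at h
    cases hpa : p a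
    · rw [hpa] at h
      simp only at h
      rcases Nat.eq_or_lt_of_le haj with rfl | hlt
      · exact hpa
      · exact ih h j hlt hji
    · rw [hpa] at h
      simp only [Option.some.injEq] at h
      omega

lemma step_spec {n : ℕ} (hn : 1 ≤ n) {w w' : List ℕ} (h : greedyStep n w = some w') :
    ∃ i, 1 ≤ i ∧ i ≤ (w.drop (w.length - (n-1))).length + 1 ∧
      ¬ covers w n (red (ext i (w.drop (w.length - (n-1))))) ∧
      (∀ j, 1 ≤ j → j < i → covers w n (red (ext j (w.drop (w.length - (n-1)))))) ∧
      w' = w.map (cshift (extb (w.drop (w.length - (n-1))) i)) ++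
        [extb (w.drop (w.length - (n-1))) i] := by
  set s := w.drop (w.length - (n-1)) with hs
  have h' : (match (List.range' 1 (s.length + 1)).find? (fun i => ! coversB w n (red (ext i s))) with
    | some i => some (w.map (cshift (extb s i)) ++ [extb s i])
    | none => (none : Option (List ℕ))) = some w' := h
  clear h
  rcases hfind : (List.range' 1 (s.length + 1)).find? (fun i => ! coversB w n (red (ext i s))) with _ | i
  · rw [hfind] at h'; simp at h'
  · rw [hfind] at h'
    simp only [Option.some.injEq] at h'
    rename' h' => h
    have hpred := List.find?_some hfind
    have hmem := List.mem_range'_1.mp (List.mem_of_find?_eq_some hfind)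
    refine ⟨i, hmem.1, by omega, ?_, ?_, h.symm⟩
    · rw [Bool.not_eq_true', ← Bool.not_eq_true] at hpred
      rw [← coversB_iff hn]
      simpa using hpred
    · intro j hj hji
      have := find?_range'_min hfind j hj hji
      rw [Bool.not_eq_false'] at this
      exact (coversB_iff hn _).mp this

lemma step_none {n : ℕ} (hn : 1 ≤ n) {w : List ℕ} (h : greedyStep n w = none) :
    ∀ i, 1 ≤ i → i ≤ (w.drop (w.length - (n-1))).length + 1 →
      covers w n (red (ext i (w.drop (w.length - (n-1))))) := by
  set s := w.drop (w.length - (n-1)) with hs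
  have h' : (match (List.range' 1 (s.length + 1)).find? (fun i => ! coversB w n (red (ext i s))) with
    | some i => some (w.map (cshift (extb s i)) ++ [extb s i])
    | none => (none : Option (List ℕ))) = none := h
  clear h
  rcases hfind : (List.range' 1 (s.length + 1)).find? (fun i => ! coversB w n (red (ext i s))) with _ | i
  · intro i h1 h2
    have := List.find?_eq_none.mp hfind i (List.mem_range'_1.mpr ⟨h1, by omega⟩)
    rw [← coversB_iff hn]
    simpa using this
  · rw [hfind] at h'; simp at h'

lemma drop_step (w : List ℕ) (b t : ℕ) (ht : t ≤ w.length) :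
    (w.map (cshift b) ++ [b]).drop t = (w.drop t).map (cshift b) ++ [b] := by
  rw [List.drop_append, List.map_drop]
  congr 1
  rw [show t - (w.map (cshift b)).length = 0 by simp; omega, List.drop_zero]

lemma window_old {w : List ℕ} {b n t : ℕ} (ht : t + n ≤ w.length) :
    ((w.map (cshift b) ++ [b]).drop t).take n = ((w.drop t).take n).map (cshift b) := by
  rw [drop_step _ _ _ (by omega), List.take_append_of_le_length (by simp; omega), List.map_take]

lemma window_new {w : List ℕ} {b n : ℕ} (hln : n - 1 ≤ w.length) (hn : 1 ≤ n) :
    ((w.map (cshift b) ++ [b]).drop (w.length - (n-1))).take n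
      = (w.drop (w.length - (n-1))).map (cshift b) ++ [b] := by
  rw [drop_step _ _ _ (by omega)]
  apply List.take_of_length_le
  simp
  omega

lemma covers_mono {w : List ℕ} {b n : ℕ} {p : List ℕ} (h : covers w n p) :
    covers (w.map (cshift b) ++ [b]) n p := by
  obtain ⟨t, ht, hred⟩ := h
  exact ⟨t, by simp; omega, by rw [window_old ht, red_map_cshift, hred]⟩

lemma covers_step_iff {w : List ℕ} {b n : ℕ} (hn : 1 ≤ n) (hln : n - 1 ≤ w.length) (p : List ℕ) :
    covers (w.map (cshift b) ++ [b]) n p ↔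
      covers w n p ∨ p = red ((w.drop (w.length - (n-1))).map (cshift b) ++ [b]) := by
  constructor
  · rintro ⟨t, ht, hred⟩
    have ht' : t + n ≤ w.length + 1 := by simpa using ht
    rcases Nat.lt_or_ge (t + n) (w.length + 1) with hc | hc
    · left
      exact ⟨t, by omega, by rw [← hred, window_old (by omega), red_map_cshift]⟩
    · right
      have : t = w.length - (n-1) := by omega
      subst this
      rw [← hred, window_new hln hn]
  · rintro (h | rfl)
    · exact covers_mono h
    · exact ⟨w.length - (n-1), by simp; omega, by rw [window_new hln hn]⟩

/-- the greedy invariant. -/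
def Inv (n : ℕ) (w : List ℕ) : Prop :=
  (n - 1 ≤ w.length) ∧ (∀ t, ((w.drop t).take n).Nodup) ∧
  (∀ t t', t + n ≤ w.length → t' + n ≤ w.length → t ≠ t' →
    red ((w.drop t).take n) ≠ red ((w.drop t').take n)) ∧
  (∀ q : List ℕ, q.Perm (List.range' 1 (n-1)) → ∀ i j, 1 ≤ j → j ≤ i → i ≤ n →
    covers w n (ext i q) → covers w n (ext j q))

lemma inv_zero (n : ℕ) (hn : 1 ≤ n) : Inv n (List.range' 1 (n-1)) := by
  refine ⟨by simp, ?_, ?_, ?_⟩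
  · intro t
    exact List.Nodup.sublist ((List.take_sublist _ _).trans (List.drop_sublist _ _))
      List.nodup_range'
  · intro t t' ht ht' hne
    simp at ht ht'
    omega
  · intro q hq i j h1 h2 h3 hcov
    obtain ⟨c, hc, -⟩ := hcov
    simp at hc
    omega

lemma suffix_spec {n : ℕ} {w : List ℕ} (hn : 1 ≤ n) (hI : Inv n w) :
    (w.drop (w.length - (n-1))).length = n - 1 ∧ (w.drop (w.length - (n-1))).Nodup := by
  obtain ⟨hlen, hnd, -, -⟩ := hI
  constructor
  · simp; omega
  · have := hnd (w.length - (n-1))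
    rwa [List.take_of_length_le (by simp; omega)] at this

lemma inv_step {n : ℕ} {w w' : List ℕ} (hn : 1 ≤ n) (hI : Inv n w)
    (h : greedyStep n w = some w') : Inv n w' ∧ w'.length = w.length + 1 := by
  obtain ⟨i, hi1, hi2, hnc, hmin, hw'⟩ := step_spec hn h
  set s := w.drop (w.length - (n-1)) with hs
  obtain ⟨hslen, hsnd⟩ := suffix_spec hn hI
  rw [← hs] at hslen hsnd
  set b := extb s i with hb
  obtain ⟨hlen, hnd, hdist, hdc⟩ := hI
  have hext : s.map (cshift b) ++ [b] = ext i s := rfl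
  have hq : (red s).Perm (List.range' 1 (n-1)) := hslen ▸ red_perm_range' hsnd
  have hredext : red (ext i s) = ext i (red s) := red_ext hsnd hi1 (by omega)
  have hL' : w'.length = w.length + 1 := by rw [hw']; simp
  subst hw'
  refine ⟨⟨by simp; omega, ?_, ?_, ?_⟩, hL'⟩
  · -- nodup windows
    intro t
    rcases Nat.lt_or_ge w.length t with hc | hc
    · rw [List.drop_eq_nil_of_le (by simp; omega)]
      simp
    · rcases Nat.lt_or_ge w.length (t + n) with hc2 | hc2
      · -- boundary window
        rw [drop_step _ _ _ hc, List.take_of_length_le (by simp; omega)]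
        rw [(List.perm_append_singleton _ _).nodup_iff, List.nodup_cons]
        constructor
        · intro hmem
          rcases List.mem_map.mp hmem with ⟨y, -, hy⟩
          exact cshift_ne b y hy
        · apply List.Nodup.map (cshift_injective b)
          have := hnd t
          rwa [List.take_of_length_le (by simp; omega)] at this
      · rw [window_old hc2]
        exact List.Nodup.map (cshift_injective b) (hnd t)
  · -- distinct window patterns
    intro t t' ht ht' hne
    simp only [List.length_append, List.length_map, List.length_cons, List.length_nil] at ht ht'
    have key : ∀ u u', u + n ≤ w.length → u' + n = w.length + 1 →
        red (((w.map (cshift b) ++ [b]).drop u).take n) ≠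
        red (((w.map (cshift b) ++ [b]).drop u').take n) := by
      intro u u' hu hu' heq
      have hu'' : u' = w.length - (n-1) := by omega
      subst hu''
      rw [window_old hu, red_map_cshift, window_new (by omega) hn, hext] at heq
      exact hnc ⟨u, hu, heq⟩
    rcases Nat.lt_or_ge (t + n) (w.length + 1) with hc | hc <;>
      rcases Nat.lt_or_ge (t' + n) (w.length + 1) with hc' | hc'
    · rw [window_old (by omega), window_old (by omega), red_map_cshift, red_map_cshift]
      exact hdist t t' (by omega) (by omega) hne
    · exact key t t' (by omega) (by omega)
    · intro heq
      exact key t' t (by omega) (by omega) heq.symm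
    · omega
  · -- downward closure
    intro q hqperm j j' h1 h2 h3 hcov
    have hql : q.length = n - 1 := by simpa using hqperm.length_eq
    rcases (covers_step_iff hn hlen _).mp hcov with hold | hnew
    · exact covers_mono (hdc q hqperm j j' h1 h2 h3 hold)
    · rw [hext, hredext] at hnew
      obtain ⟨hji, hqs⟩ := ext_inj hqperm hq (by omega) h3 hi1 (by omega) hn hnew
      rcases Nat.eq_or_lt_of_le h2 with rfl | hlt
      · -- j' = j = i : the new window itself
        apply (covers_step_iff hn hlen _).mpr
        right
        rw [hext, hredext, hqs, hji]
      · -- j' < i : was covered before by minimality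
        have hcov' := hmin j' h1 (by omega)
        rw [red_ext hsnd h1 (by omega), ← hqs] at hcov'
        exact covers_mono hcov'

lemma greedy_succ_of_some {n j : ℕ} {w' : List ℕ} (h : greedyStep n (greedy n j) = some w') :
    greedy n (j+1) = w' := by
  show (match greedyStep n (greedy n j) with | some w => w | none => greedy n j) = w'
  rw [h]

lemma inv_greedy {n k : ℕ} (hn : 1 ≤ n) (hterm : ∀ j < k, greedyStep n (greedy n j) ≠ none) :
    ∀ j, j ≤ k → Inv n (greedy n j) ∧ (greedy n j).length = n - 1 + j ∧
      red ((greedy n j).take (n-1)) = List.range' 1 (n-1) := by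
  intro j
  induction j with
  | zero =>
    intro _
    refine ⟨inv_zero n hn, by simp [greedy], ?_⟩
    show red ((List.range' 1 (n-1)).take (n-1)) = _
    rw [List.take_of_length_le (by simp), red_range']
  | succ j ih =>
    intro hj
    obtain ⟨hI, hLen, hpre⟩ := ih (by omega)
    have hne := hterm j (by omega)
    rcases hw' : greedyStep n (greedy n j) with _ | w'
    · exact absurd hw' hne
    obtain ⟨hI', hL'⟩ := inv_step hn hI hw'
    obtain ⟨i, hi1, hi2, hnc, hmin, hform⟩ := step_spec hn hw'
    rw [greedy_succ_of_some hw']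
    refine ⟨hI', by omega, ?_⟩
    rw [hform, List.take_append_of_le_length (by simp; omega), ← List.map_take,
      red_map_cshift, hpre]

open scoped Classical in
noncomputable def Pcnt (n k : ℕ) (w : List ℕ) (q : List ℕ) : ℕ :=
  ((Finset.range k).filter (fun t => red ((w.drop t).take (n-1)) = q)).card

open scoped Classical in
noncomputable def Scnt (n k : ℕ) (w : List ℕ) (q : List ℕ) : ℕ :=
  ((Finset.range k).filter (fun t => red ((w.drop (t+1)).take (n-1)) = q)).card

open scoped Classical in
noncomputable def Iset (n : ℕ) (w : List ℕ) (q : List ℕ) : Finset ℕ :=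
  (Finset.Icc 1 n).filter (fun i => covers w n (ext i q))

open scoped Classical in
noncomputable def Jset (n : ℕ) (w : List ℕ) (q : List ℕ) : Finset ℕ :=
  (Finset.Icc 1 n).filter (fun a => covers w n (a :: q.map (cshift a)))

open scoped Classical

lemma count_identity (n k : ℕ) (w : List ℕ) (q : List ℕ) :
    Pcnt n k w q + (if red ((w.drop k).take (n-1)) = q then 1 else 0)
      = Scnt n k w q + (if red ((w.drop 0).take (n-1)) = q then 1 else 0) := by
  have hcard : ∀ (f : ℕ → Prop) (m : ℕ) [DecidablePred f],
      ((Finset.range m).filter f).card = ∑ t ∈ Finset.range m, (if f t then 1 else 0) := by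
    intro f m _
    rw [Finset.card_filter]
  unfold Pcnt Scnt
  rw [hcard, hcard]
  have h1 := Finset.sum_range_succ (fun t => if red ((w.drop t).take (n-1)) = q then 1 else 0) k
  have h2 := Finset.sum_range_succ' (fun t => if red ((w.drop t).take (n-1)) = q then 1 else 0) k
  omega

section Final

variable {n k : ℕ} {w : List ℕ}

lemma window_length (hn : 1 ≤ n) (hL : w.length = n - 1 + k) {t : ℕ} (ht : t < k) :
    ((w.drop t).take n).length = n := by
  simp [List.length_take]
  omega

lemma sigma_perm (hn : 1 ≤ n) (hL : w.length = n - 1 + k) (hI : Inv n w) {t : ℕ} (ht : t < k) :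
    (red ((w.drop t).take n)).Perm (List.range' 1 n) := by
  rw [show List.range' 1 n = List.range' 1 ((w.drop t).take n).length by
    rw [window_length hn hL ht]]
  exact red_perm_range' (hI.2.1 t)

lemma tau_perm (hn : 1 ≤ n) (hL : w.length = n - 1 + k) (hI : Inv n w) {t : ℕ} (ht : t ≤ k) :
    (red ((w.drop t).take (n-1))).Perm (List.range' 1 (n-1)) := by
  have hlen : ((w.drop t).take (n-1)).length = n - 1 := by
    simp [List.length_take]; omega
  rw [show List.range' 1 (n-1) = List.range' 1 ((w.drop t).take (n-1)).length by rw [hlen]]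
  apply red_perm_range'
  have hsub : ((w.drop t).take (n-1)).Sublist ((w.drop t).take n) := by
    rw [show n - 1 = min (n-1) n by omega, ← List.take_take]
    exact List.take_sublist _ _
  exact hsub.nodup (hI.2.1 t)

lemma covers_iff_sigma (hn : 1 ≤ n) (hk : 1 ≤ k) (hL : w.length = n - 1 + k) (p : List ℕ) :
    covers w n p ↔ ∃ t, t < k ∧ red ((w.drop t).take n) = p := by
  unfold covers
  constructor
  · rintro ⟨t, ht, h⟩
    exact ⟨t, by omega, h⟩
  · rintro ⟨t, ht, h⟩
    exact ⟨t, by omega, h⟩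

lemma sigma_take (hn : 1 ≤ n) {t : ℕ} :
    red ((red ((w.drop t).take n)).take (n-1)) = red ((w.drop t).take (n-1)) := by
  rw [red_take, List.take_take, show min (n-1) n = n - 1 by omega]

lemma sigma_drop (hn : 1 ≤ n) {t : ℕ} :
    red ((red ((w.drop t).take n)).drop 1) = red ((w.drop (t+1)).take (n-1)) := by
  rw [red_drop, List.drop_take, List.drop_drop]

end Final

section Final2

variable {n k : ℕ} {w : List ℕ}

lemma cardP (hn : 1 ≤ n) (hk : 1 ≤ k) (hL : w.length = n - 1 + k) (hI : Inv n w)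
    {q : List ℕ} (hq : q.Perm (List.range' 1 (n-1))) :
    Pcnt n k w q = (Iset n w q).card := by
  have hql : q.length = n - 1 := by simpa using hq.length_eq
  unfold Pcnt Iset
  apply Finset.card_bij (fun t _ => (red ((w.drop t).take n)).getD (n-1) 0)
  · -- maps into Iset
    intro t ht
    rw [Finset.mem_filter, Finset.mem_range] at ht
    obtain ⟨ht, htau⟩ := ht
    have hperm := sigma_perm hn hL hI ht
    obtain ⟨heq, hq2, ha1, ha2⟩ := eq_ext hn hperm
    rw [Finset.mem_filter, Finset.mem_Icc]
    refine ⟨⟨ha1, ha2⟩, ?_⟩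
    rw [covers_iff_sigma hn hk hL]
    refine ⟨t, ht, ?_⟩
    conv_lhs => rw [heq]
    rw [sigma_take hn, htau]
  · -- injective
    intro t1 ht1 t2 ht2 heq
    rw [Finset.mem_filter, Finset.mem_range] at ht1 ht2
    by_contra hne
    have hperm1 := sigma_perm hn hL hI ht1.1
    have hperm2 := sigma_perm hn hL hI ht2.1
    obtain ⟨heq1, -, -, -⟩ := eq_ext hn hperm1
    obtain ⟨heq2, -, -, -⟩ := eq_ext hn hperm2
    have : red ((w.drop t1).take n) = red ((w.drop t2).take n) := by
      conv_lhs => rw [heq1]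
      conv_rhs => rw [heq2]
      rw [heq, sigma_take hn, sigma_take hn, ht1.2, ht2.2]
    exact hI.2.2.1 t1 t2 (by omega) (by omega) hne this
  · -- surjective
    intro i hi
    rw [Finset.mem_filter, Finset.mem_Icc] at hi
    obtain ⟨⟨hi1, hi2⟩, hcov⟩ := hi
    rw [covers_iff_sigma hn hk hL] at hcov
    obtain ⟨t, ht, hsig⟩ := hcov
    have hextb : extb q i = i := extb_red hq hi1 (by omega)
    have htake : (ext i q).take (n-1) = q.map (cshift i) := by
      rw [ext_of_perm hq hi1 (by omega), List.take_append_of_le_length (by simp; omega),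
        List.take_of_length_le (by simp; omega)]
    have hlast : (ext i q).getD (n-1) 0 = i := by
      rw [ext_of_perm hq hi1 (by omega), List.getD_append_right _ _ _ _ (by simp; omega)]
      simp [hql]
    refine ⟨t, ?_, ?_⟩
    · rw [Finset.mem_filter, Finset.mem_range]
      refine ⟨ht, ?_⟩
      rw [← sigma_take hn, hsig, htake, red_map_cshift, red_of_perm_range' hq]
    · rw [hsig, hlast]

lemma cardS (hn : 1 ≤ n) (hk : 1 ≤ k) (hL : w.length = n - 1 + k) (hI : Inv n w)
    {q : List ℕ} (hq : q.Perm (List.range' 1 (n-1))) :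
    Scnt n k w q = (Jset n w q).card := by
  have hql : q.length = n - 1 := by simpa using hq.length_eq
  unfold Scnt Jset
  apply Finset.card_bij (fun t _ => (red ((w.drop t).take n)).getD 0 0)
  · intro t ht
    rw [Finset.mem_filter, Finset.mem_range] at ht
    obtain ⟨ht, htau⟩ := ht
    have hperm := sigma_perm hn hL hI ht
    obtain ⟨heq, hq2, ha1, ha2⟩ := eq_lext hn hperm
    rw [Finset.mem_filter, Finset.mem_Icc]
    refine ⟨⟨ha1, ha2⟩, ?_⟩
    rw [covers_iff_sigma hn hk hL]
    refine ⟨t, ht, ?_⟩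
    conv_lhs => rw [heq]
    rw [sigma_drop hn, htau]
  · intro t1 ht1 t2 ht2 heq
    rw [Finset.mem_filter, Finset.mem_range] at ht1 ht2
    by_contra hne
    have hperm1 := sigma_perm hn hL hI ht1.1
    have hperm2 := sigma_perm hn hL hI ht2.1
    obtain ⟨heq1, -, -, -⟩ := eq_lext hn hperm1
    obtain ⟨heq2, -, -, -⟩ := eq_lext hn hperm2
    have : red ((w.drop t1).take n) = red ((w.drop t2).take n) := by
      conv_lhs => rw [heq1]
      conv_rhs => rw [heq2]
      rw [heq, sigma_drop hn, sigma_drop hn, ht1.2, ht2.2]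
    exact hI.2.2.1 t1 t2 (by omega) (by omega) hne this
  · intro a ha
    rw [Finset.mem_filter, Finset.mem_Icc] at ha
    obtain ⟨⟨ha1, ha2⟩, hcov⟩ := ha
    rw [covers_iff_sigma hn hk hL] at hcov
    obtain ⟨t, ht, hsig⟩ := hcov
    refine ⟨t, ?_, ?_⟩
    · rw [Finset.mem_filter, Finset.mem_range]
      refine ⟨ht, ?_⟩
      rw [← sigma_drop hn, hsig]
      show red (List.map (cshift a) q) = q
      rw [red_map_cshift, red_of_perm_range' hq]
    · rw [hsig]
      rfl

end Final2

lemma red_tail_top (u : List ℕ) (N M : ℕ) (hN : u.length < N) (hM : ∀ x ∈ u, x < M) :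
    red ((red u).drop 1 ++ [N]) = red (u.drop 1 ++ [M]) := by
  have hredlen : (red u).length = u.length := by simp
  have hlenA : ((red u).drop 1 ++ [N]).length = (u.length - 1) + 1 := by simp
  have hlenB : (u.drop 1 ++ [M]).length = (u.length - 1) + 1 := by simp
  have bndA : ∀ (x : ℕ) (hx : x < (red u).length), (red u)[x] ≤ u.length := by
    intro x hx
    have := mem_red (List.getElem_mem hx)
    omega
  have bndB : ∀ (x : ℕ) (hx : x < u.length), u[x] < M :=
    fun x hx => hM _ (List.getElem_mem hx)
  have getA : ∀ (x : ℕ) (hx : x < ((red u).drop 1 ++ [N]).length),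
      ((red u).drop 1 ++ [N])[x] = if x < u.length - 1 then (red u).getD (1+x) 0 else N := by
    intro x hx
    rw [hlenA] at hx
    split_ifs with hc
    · rw [List.getElem_append_left (by simp; omega), List.getElem_drop,
        List.getD_eq_getElem _ _ (by omega)]
    · rw [List.getElem_append_right (by simp; omega)]
      simp
  have getB : ∀ (x : ℕ) (hx : x < (u.drop 1 ++ [M]).length),
      (u.drop 1 ++ [M])[x] = if x < u.length - 1 then u.getD (1+x) 0 else M := by
    intro x hx
    rw [hlenB] at hx
    split_ifs with hc
    · rw [List.getElem_append_left (by simp; omega), List.getElem_drop,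
        List.getD_eq_getElem _ _ (by omega)]
    · rw [List.getElem_append_right (by simp; omega)]
      simp
  apply red_congr (by rw [hlenA, hlenB])
  intro p r hp hr
  rw [getA p hp, getA r (by omega), getB p (by rw [hlenB]; rw [hlenA] at hp; omega),
    getB r (by rw [hlenB]; rw [hlenA] at hr; omega)]
  rw [hlenA] at hp hr
  rcases Nat.lt_or_ge p (u.length - 1) with hpc | hpc <;>
    rcases Nat.lt_or_ge r (u.length - 1) with hrc | hrc
  · rw [if_pos hpc, if_pos hrc, if_pos hpc, if_pos hrc, List.getD_eq_getElem _ _ (by omega),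
      List.getD_eq_getElem _ _ (by omega), List.getD_eq_getElem _ _ (by omega),
      List.getD_eq_getElem _ _ (by omega)]
    exact (red_cmp u (1+p) (1+r) (by omega) (by omega)).symm
  · rw [if_pos hpc, if_neg (by omega), if_pos hpc, if_neg (by omega),
      List.getD_eq_getElem _ _ (by omega), List.getD_eq_getElem _ _ (by omega)]
    have h1 := bndA (1+p) (by omega)
    have h2 := bndB (1+p) (by omega)
    constructor <;> intro <;> omega
  · rw [if_neg (by omega), if_pos hrc, if_neg (by omega), if_pos hrc,
      List.getD_eq_getElem _ _ (by omega), List.getD_eq_getElem _ _ (by omega)]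
    have h1 := bndA (1+r) (by omega)
    have h2 := bndB (1+r) (by omega)
    constructor <;> intro <;> omega
  · rw [if_neg (show ¬ p < u.length - 1 by omega), if_neg (show ¬ r < u.length - 1 by omega),
      if_neg (show ¬ p < u.length - 1 by omega), if_neg (show ¬ r < u.length - 1 by omega)]
    simp

section Final3

variable {n k : ℕ} {w : List ℕ}

lemma Pcnt_lt_of_not_covered (hn : 1 ≤ n) (hk : 1 ≤ k) (hL : w.length = n - 1 + k)
    (hI : Inv n w) {q : List ℕ} (hq : q.Perm (List.range' 1 (n-1))) {a : ℕ}
    (ha : a ∈ Finset.Icc 1 n) (hnc : ¬ covers w n (ext a q)) :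
    Pcnt n k w q < n := by
  rw [cardP hn hk hL hI hq]
  have hsub : Iset n w q ⊆ (Finset.Icc 1 n).erase a := by
    intro x hx
    unfold Iset at hx
    rw [Finset.mem_filter] at hx
    rw [Finset.mem_erase]
    refine ⟨?_, hx.1⟩
    rintro rfl
    exact hnc hx.2
  calc (Iset n w q).card ≤ ((Finset.Icc 1 n).erase a).card := Finset.card_le_card hsub
    _ = n - 1 := by rw [Finset.card_erase_of_mem ha, Nat.card_Icc]; omega
    _ < n := by omega

lemma Scnt_lt_of_not_covered (hn : 1 ≤ n) (hk : 1 ≤ k) (hL : w.length = n - 1 + k)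
    (hI : Inv n w) {q : List ℕ} (hq : q.Perm (List.range' 1 (n-1))) {a : ℕ}
    (ha : a ∈ Finset.Icc 1 n) (hnc : ¬ covers w n (a :: q.map (cshift a))) :
    Scnt n k w q < n := by
  rw [cardS hn hk hL hI hq]
  have hsub : Jset n w q ⊆ (Finset.Icc 1 n).erase a := by
    intro x hx
    unfold Jset at hx
    rw [Finset.mem_filter] at hx
    rw [Finset.mem_erase]
    refine ⟨?_, hx.1⟩
    rintro rfl
    exact hnc hx.2
  calc (Jset n w q).card ≤ ((Finset.Icc 1 n).erase a).card := Finset.card_le_card hsub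
    _ = n - 1 := by rw [Finset.card_erase_of_mem ha, Nat.card_Icc]; omega
    _ < n := by omega

lemma chain_step (hn : 1 ≤ n) (hk : 1 ≤ k) (hL : w.length = n - 1 + k) (hI : Inv n w)
    {q : List ℕ} (hq : q.Perm (List.range' 1 (n-1))) (hn2 : 2 ≤ n)
    (hP : Pcnt n k w q < n) (hPS : ∀ q', q'.Perm (List.range' 1 (n-1)) →
      Pcnt n k w q' = Scnt n k w q') :
    (red (q.drop 1 ++ [n])).Perm (List.range' 1 (n-1)) ∧
      Pcnt n k w (red (q.drop 1 ++ [n])) < n := by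
  have hql : q.length = n - 1 := by simpa using hq.length_eq
  -- the full extension is uncovered
  have hnotcov : ¬ covers w n (ext n q) := by
    intro hc
    have hall : ∀ i ∈ Finset.Icc 1 n, covers w n (ext i q) := by
      intro i hi
      rw [Finset.mem_Icc] at hi
      exact hI.2.2.2 q hq n i hi.1 hi.2 (le_refl n) hc
    have : Iset n w q = Finset.Icc 1 n := by
      unfold Iset
      rw [Finset.filter_eq_self]
      exact hall
    rw [cardP hn hk hL hI hq, this, Nat.card_Icc] at hP
    omega
  have hextn : ext n q = q ++ [n] := by
    rw [ext_of_perm hq (by omega) (by omega)]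
    congr 1
    conv_rhs => rw [show q = q.map id from (List.map_id q).symm]
    apply List.map_congr_left
    intro x hx
    have := List.mem_range'_1.mp (hq.mem_iff.mp hx)
    show cshift n x = id x
    unfold cshift
    rw [if_pos (by omega)]
    rfl
  have hpi : (q ++ [n]).Perm (List.range' 1 n) := by
    have := ext_perm_range' hq (show 1 ≤ n by omega) (by omega)
    rw [hextn] at this
    rwa [show n - 1 + 1 = n by omega] at this
  obtain ⟨heq, hq', ha1, ha2⟩ := eq_lext hn hpi
  set a := (q ++ [n]).getD 0 0 with ha
  set q' := red ((q ++ [n]).drop 1) with hq'def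
  have hdrop : (q ++ [n]).drop 1 = q.drop 1 ++ [n] := by
    rw [List.drop_append, show 1 - q.length = 0 by omega, List.drop_zero]
  have hnotmem : ¬ covers w n (a :: q'.map (cshift a)) := by
    rw [← heq, ← hextn]
    exact hnotcov
  have hS := Scnt_lt_of_not_covered hn hk hL hI hq' (Finset.mem_Icc.mpr ⟨ha1, ha2⟩) hnotmem
  rw [hq'def, hdrop] at hq' hS
  exact ⟨hq', by rw [hPS _ hq']; exact hS⟩

end Final3

theorem main (n : ℕ) (hn : 1 ≤ n) (k : ℕ) (hterm : terminatesAt n k) :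
    ∀ p : List ℕ, p.Perm (List.range' 1 n) → covers (greedy n k) n p := by
  obtain ⟨hsteps, hstop⟩ := hterm
  have hk : 1 ≤ k := by
    by_contra hc
    push_neg at hc
    have hk0 : k = 0 := by omega
    subst hk0
    obtain ⟨c, hcle, -⟩ := step_none hn hstop 1 (by omega) (by omega)
    have hglen : (greedy n 0).length = n - 1 := by simp [greedy]
    omega
  obtain ⟨hI, hL, hpre⟩ := inv_greedy hn hsteps k (le_refl k)
  set w := greedy n k with hw
  have hwlen : w.length = n - 1 + k := hL
  have hdropk : w.length - (n-1) = k := by omega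
  have hsklen : (w.drop k).length = n - 1 := by simp; omega
  have hsknd : (w.drop k).Nodup := by
    have := (suffix_spec hn hI).2
    rwa [hdropk] at this
  have htauk_eq : red ((w.drop k).take (n-1)) = red (w.drop k) := by
    rw [List.take_of_length_le (by omega)]
  have hcovext : ∀ i, 1 ≤ i → i ≤ n → covers w n (ext i (red ((w.drop k).take (n-1)))) := by
    intro i h1 h2
    have hsn := step_none hn hstop i h1 (by rw [hdropk]; omega)
    rw [hdropk] at hsn
    rw [red_ext hsknd h1 (by omega)] at hsn
    rwa [htauk_eq]
  have hτk : (red ((w.drop k).take (n-1))).Perm (List.range' 1 (n-1)) :=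
    tau_perm hn hL hI (le_refl k)
  set τk := red ((w.drop k).take (n-1)) with hτkdef
  have hIk : Iset n w τk = Finset.Icc 1 n := by
    unfold Iset
    rw [Finset.filter_eq_self]
    intro i hi
    rw [Finset.mem_Icc] at hi
    exact hcovext i hi.1 hi.2
  have hPkn : Pcnt n k w τk = n := by
    rw [cardP hn hk hL hI hτk, hIk, Nat.card_Icc]
    omega
  have hSle : ∀ q : List ℕ, q.Perm (List.range' 1 (n-1)) → Scnt n k w q ≤ n := by
    intro q hq
    rw [cardS hn hk hL hI hq]
    calc (Jset n w q).card ≤ (Finset.Icc 1 n).card := Finset.card_filter_le _ _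
      _ = n := by rw [Nat.card_Icc]; omega
  have hτ0 : red ((w.drop 0).take (n-1)) = List.range' 1 (n-1) := by
    rw [List.drop_zero]; exact hpre
  have h00 : red ((w.drop 0).take (n-1)) = τk := by
    have hi := count_identity n k w τk
    rw [if_pos rfl] at hi
    have hS := hSle τk hτk
    by_contra hne
    rw [if_neg hne] at hi
    omega
  have hPS : ∀ q' : List ℕ, q'.Perm (List.range' 1 (n-1)) →
      Pcnt n k w q' = Scnt n k w q' := by
    intro q hq
    have hi := count_identity n k w q
    rw [h00] at hi
    by_cases hc : τk = q
    · rw [if_pos hc] at hi; omega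
    · rw [if_neg hc] at hi; omega
  have hPτ0 : Pcnt n k w (List.range' 1 (n-1)) = n := by
    have : List.range' 1 (n-1) = τk := by rw [← hτ0, h00]
    rw [this, hPkn]
  have hchain : ∀ (q : List ℕ), q.Perm (List.range' 1 (n-1)) → Pcnt n k w q < n →
      ∀ j, j ≤ n - 1 → (red (q.drop j ++ List.range' n j)).Perm (List.range' 1 (n-1)) ∧
        Pcnt n k w (red (q.drop j ++ List.range' n j)) < n := by
    intro q hq hPq j
    induction j with
    | zero =>
      intro _
      simp only [List.drop_zero, List.range'_zero, List.append_nil]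
      rw [red_of_perm_range' hq]
      exact ⟨hq, hPq⟩
    | succ j ih =>
      intro hj
      obtain ⟨hperm, hlt⟩ := ih (by omega)
      have hn2 : 2 ≤ n := by omega
      obtain ⟨hperm', hlt'⟩ := chain_step hn hk hL hI hperm hn2 hlt hPS
      have hql : q.length = n - 1 := by simpa using hq.length_eq
      have hulen : (q.drop j ++ List.range' n j).length = n - 1 := by simp; omega
      have hA : red ((red (q.drop j ++ List.range' n j)).drop 1 ++ [n])
          = red ((q.drop j ++ List.range' n j).drop 1 ++ [n + j]) := by
        apply red_tail_top
        · omega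
        intro x hx
        rcases List.mem_append.mp hx with hx1 | hx2
        · have := List.mem_range'_1.mp (hq.mem_iff.mp (List.mem_of_mem_drop hx1))
          omega
        · have := List.mem_range'_1.mp hx2
          omega
      have hB : (q.drop j ++ List.range' n j).drop 1 ++ [n + j]
          = q.drop (j+1) ++ List.range' n (j+1) := by
        rw [List.drop_append,
          show 1 - (q.drop j).length = 0 by rw [List.length_drop]; omega,
          List.drop_zero, List.drop_drop, List.append_assoc,
          List.range'_concat]
        simp
      rw [hA, hB] at hperm' hlt'
      exact ⟨hperm', hlt'⟩
  intro p hp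
  obtain ⟨heq, hq, ha1, ha2⟩ := eq_ext hn hp
  by_contra hnc
  have hncov : ¬ covers w n (ext (p.getD (n-1) 0) (red (p.take (n-1)))) := by
    rw [← heq]; exact hnc
  have hPdef : Pcnt n k w (red (p.take (n-1))) < n :=
    Pcnt_lt_of_not_covered hn hk hL hI hq (Finset.mem_Icc.mpr ⟨ha1, ha2⟩) hncov
  obtain ⟨hperm, hlt⟩ := hchain _ hq hPdef (n-1) (le_refl _)
  have hqpl : (red (p.take (n-1))).length = n - 1 := by simpa using hq.length_eq
  have hfinal : red ((red (p.take (n-1))).drop (n-1) ++ List.range' n (n-1))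
      = List.range' 1 (n-1) := by
    rw [List.drop_eq_nil_of_le (by omega), List.nil_append, red_range']
  rw [hfinal] at hlt
  omega


end SG

/-- The output `Π'_n` of the greedy algorithm covers every `n`-permutation. -/
theorem stmt5 (n : ℕ) (hn : 1 ≤ n) (k : ℕ) (hterm : terminatesAt n k) :
    ∀ p : List ℕ, p.Perm (List.range' 1 n) → covers (greedy n k) n p := by
  exact SG.main n hn k hterm
end

section
/- In the greedy construction, Π'_{n,n−1} = n(n+1)⋯(2n−2)(n−1)(n−2)⋯1; that is, after the first n−1 steps, the word consists of the increasing run n, n+1, ..., 2n−2 followed by the decreasing run n−1, n−2, ..., 1. -/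
section Helpers

lemma filt_len (c : ℕ) : ∀ (m a : ℕ),
    ((List.range' a m).filter (· ≤ c)).length = min m (c + 1 - a) := by
  intro m
  induction m with
  | zero => simp
  | succ m ih =>
    intro a
    rw [List.range'_succ, List.filter_cons]
    by_cases h : a ≤ c
    · rw [if_pos (by simpa using h), List.length_cons, ih]
      omega
    · rw [if_neg (by simpa using h), ih]
      omega

lemma filt_all {c : ℕ} {T : List ℕ} (h : ∀ x ∈ T, x ≤ c) :
    T.filter (· ≤ c) = T :=
  List.filter_eq_self.mpr (fun a ha => by simpa using h a ha)

lemma red_head (x : ℕ) (t : List ℕ) :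
    (red (x :: t)).getD 0 0 = ((x :: t).filter (· ≤ x)).length := by
  simp [red]

lemma sortedMin (l : List ℕ) (h1 : 1 ∈ l) (hall : ∀ x ∈ l, 1 ≤ x) :
    (List.insertionSort (· ≤ ·) l).getD 0 0 = 1 := by
  have hperm := List.perm_insertionSort (· ≤ ·) l
  have hsort := List.pairwise_insertionSort (· ≤ ·) l
  have h1' : 1 ∈ List.insertionSort (· ≤ ·) l := hperm.mem_iff.mpr h1
  obtain ⟨a, t, ht⟩ : ∃ a t, List.insertionSort (· ≤ ·) l = a :: t := by
    cases hL : List.insertionSort (· ≤ ·) l with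
    | nil => rw [hL] at h1'; simp at h1'
    | cons a t => exact ⟨a, t, rfl⟩
  rw [ht] at h1' hsort hperm ⊢
  have ha1 : 1 ≤ a := hall a (hperm.mem_iff.mp (by simp))
  have ha2 : a ≤ 1 := by
    rcases List.mem_cons.mp h1' with h | h
    · omega
    · exact (List.pairwise_cons.mp hsort).1 1 h
  simpa using le_antisymm ha2 ha1

lemma map_cshift1 {l : List ℕ} (h : ∀ x ∈ l, 1 ≤ x) :
    l.map (cshift 1) = l.map (· + 1) := by
  apply List.map_congr_left
  intro x hx
  have := h x hx
  simp [cshift]; omega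

lemma map_add_one_range' (a m : ℕ) :
    (List.range' a m).map (· + 1) = List.range' (a + 1) m := by
  have := List.map_add_range' (a := 1) a m 1
  simpa [Nat.add_comm] using this

lemma range'_split (a k l : ℕ) :
    List.range' a (k + l) = List.range' a k ++ List.range' (a + k) l := by
  have := List.range'_append (s := a) (m := k) (n := l) (step := 1)
  rw [Nat.one_mul] at this
  rw [← this]

end Helpers

lemma greedy_step_lemma (m k : ℕ) (hk : k < m) :
    greedyStep (m + 1) (List.range' (k + 1) m ++ (List.range' 1 k).reverse) =
      some (List.range' (k + 2) m ++ (List.range' 1 (k + 1)).reverse) := by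
  set w : List ℕ := List.range' (k + 1) m ++ (List.range' 1 k).reverse with hw
  set S : List ℕ := List.range' (2 * k + 1) (m - k) ++ (List.range' 1 k).reverse with hS
  have hwlen : w.length = m + k := by simp [hw]
  have hdrop : w.drop (w.length - (m + 1 - 1)) = S := by
    rw [hwlen]
    have h1 : m + k - (m + 1 - 1) = k := by omega
    rw [h1, hw, show m = k + (m - k) from by omega, range'_split, List.append_assoc]
    rw [List.drop_left' (by simp)]
    rw [hS]
    congr 2
    omega
  have hSlen : S.length = m := by simp [hS]; omega
  have hSpos : ∀ x ∈ S, 1 ≤ x := by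
    intro x hx
    rw [hS] at hx
    rcases List.mem_append.mp hx with h | h
    · exact le_trans (by omega) (List.mem_range'_1.mp h).1
    · exact (List.mem_range'_1.mp (List.mem_reverse.mp h)).1
  have hS1 : (1 : ℕ) ∈ S := by
    rw [hS]
    rcases Nat.eq_zero_or_pos k with h | h
    · subst h
      simp [List.mem_range'_1]
      omega
    · apply List.mem_append.mpr
      right
      rw [List.mem_reverse]
      exact List.mem_range'_1.mpr ⟨le_refl 1, by omega⟩
  have hextb : extb S 1 = 1 := by
    rw [extb, if_pos (by omega), nthSmallest]
    exact sortedMin S hS1 hSpos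
  -- the extension word and its reduced head value
  have hext : ext 1 S = List.range' (2 * k + 2) (m - k) ++ (List.range' 2 k).reverse ++ [1] := by
    rw [ext, hextb]
    congr 1
    conv_lhs => rw [hS]
    rw [List.map_append, map_cshift1 (fun x hx => hSpos x (by rw [hS]; exact List.mem_append_left _ hx)),
      map_cshift1 (fun x hx => hSpos x (by rw [hS]; exact List.mem_append_right _ hx))]
    rw [map_add_one_range', List.map_reverse, map_add_one_range']
  -- head value of red (ext 1 S) is k + 2
  have hmk : m - k = (m - k - 1) + 1 := by omega
  have hextcons : ext 1 S = (2 * k + 2) :: (List.range' (2 * k + 3) (m - k - 1) ++ (List.range' 2 k).reverse ++ [1]) := by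
    rw [hext, hmk, List.range'_succ]
    simp [List.append_assoc]
  have hredext : (red (ext 1 S)).getD 0 0 = k + 2 := by
    rw [hextcons, red_head, ← hextcons, hext]
    rw [List.filter_append, List.filter_append, List.length_append, List.length_append]
    rw [filt_len, List.filter_reverse]
    have e1 : min (m - k) (2 * k + 2 + 1 - (2 * k + 2)) = 1 := by omega
    have e2 : ((List.range' 2 k).filter (· ≤ 2 * k + 2)).length = k := by
      rw [filt_len]; omega
    simp only [List.length_reverse, e1, e2]
    have : ((1 : ℕ) :: []).filter (· ≤ 2 * k + 2) = [1] := by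
      simp
    rw [this]
    simp only [List.length_cons, List.length_nil]
    omega
  -- coversB is false for the first extension
  have hcov : coversB w (m + 1) (red (ext 1 S)) = false := by
    rw [coversB, List.any_eq_false]
    intro j hj
    rw [Bool.and_eq_true, decide_eq_true_eq, decide_eq_true_eq]
    rintro ⟨hjle, hjeq⟩
    rw [hwlen] at hjle
    have hjk : j < k := by omega
    -- compute the factor starting at j
    have hdropj : w.drop j = List.range' (k + 1 + j) (m - j) ++ (List.range' 1 k).reverse := by
      conv_lhs => rw [hw, show m = j + (m - j) from by omega, range'_split, List.append_assoc]
      rw [List.drop_left' (by simp)]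
    have hfac : (w.drop j).take (m + 1) =
        List.range' (k + 1 + j) (m - j) ++ ((List.range' 1 k).reverse).take (j + 1) := by
      rw [hdropj, show m + 1 = (List.range' (k + 1 + j) (m - j)).length + (j + 1) from by
        simp; omega, List.take_length_add_append]
    have hfaccons : (w.drop j).take (m + 1) =
        (k + 1 + j) :: (List.range' (k + 2 + j) (m - j - 1) ++ ((List.range' 1 k).reverse).take (j + 1)) := by
      rw [hfac]
      have : m - j = (m - j - 1) + 1 := by omega
      rw [this, List.range'_succ]
      simp [List.append_assoc]
      congr 2
      omega
    have hT : ∀ x ∈ ((List.range' 1 k).reverse).take (j + 1), x ≤ k + 1 + j := by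
      intro x hx
      have := List.mem_reverse.mp (List.mem_of_mem_take hx)
      have := (List.mem_range'_1.mp this).2
      omega
    have hTlen : (((List.range' 1 k).reverse).take (j + 1)).length = j + 1 := by
      rw [List.length_take]
      simp
      omega
    have hredfac : (red ((w.drop j).take (m + 1))).getD 0 0 = j + 2 := by
      rw [hfaccons, red_head, ← hfaccons, hfac]
      rw [List.filter_append, List.length_append, filt_len, filt_all (hT), hTlen]
      omega
    rw [hjeq, hredext] at hredfac
    omega
  -- now unfold greedyStep
  rw [greedyStep]
  simp only [hdrop, hSlen]
  have hfind : (List.range' 1 (m + 1)).find?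
      (fun i => ! coversB w (m + 1) (red (ext i S))) = some 1 := by
    rw [List.range'_succ]
    apply List.find?_cons_of_pos
    rw [hcov]
    rfl
  rw [hfind]
  simp only [hextb, Option.some.injEq]
  rw [hw, List.map_append,
    map_cshift1 (fun x hx => by
      have := (List.mem_range'_1.mp hx).1; omega),
    map_cshift1 (fun x hx => by
      have := (List.mem_range'_1.mp (List.mem_reverse.mp hx)).1; omega),
    map_add_one_range', List.map_reverse, map_add_one_range']
  have : List.range' 1 (k + 1) = 1 :: List.range' 2 k := List.range'_succ (s := 1) (n := k) (step := 1)
  rw [this, List.reverse_cons, List.append_assoc]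

lemma greedy_eq (m : ℕ) (hm : 1 ≤ m) : ∀ k, k ≤ m →
    greedy (m + 1) k = List.range' (k + 1) m ++ (List.range' 1 k).reverse := by
  intro k
  induction k with
  | zero => intro _; simp [greedy]
  | succ k ih =>
    intro hk
    have hprev := ih (by omega)
    rw [greedy, hprev, greedy_step_lemma m k (by omega)]

/-- After the first `n-1` steps, `Π'_{n,n-1} = n(n+1)⋯(2n-2)(n-1)(n-2)⋯1`. -/
theorem stmt8 (n : ℕ) (hn : 2 ≤ n) :
    greedy n (n - 1) = List.range' n (n - 1) ++ (List.range' 1 (n - 1)).reverse := by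
  obtain ⟨m, rfl⟩ : ∃ m, n = m + 1 := ⟨n - 1, by omega⟩
  have hm : 1 ≤ m := by omega
  have := greedy_eq m hm m (le_refl m)
  simpa using this
end
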